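/- arXiv:2402.17988 — 7 statements merged into one kernel-verified Lean document; each statement's English description precedes it below -/
import Mathlib

section
/- If L is a context-free language and R is a regular language, then the right quotient L / R = { l | ∃ r ∈ R, l ++ r ∈ L } is context-free. -/
namespace RQuot
open ContextFreeGrammar

variable {A : Type} {g : ContextFreeGrammar A}

/-- Counted derivations. -/
inductive DerivesIn (g : ContextFreeGrammar A) :
    List (Symbol A g.NT) → List (Symbol A g.NT) → ℕ → Prop
  | refl (w : List (Symbol A g.NT)) : DerivesIn g w w 0
  | head {u v w : List (Symbol A g.NT)} {k : ℕ} :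
      g.Produces u v → DerivesIn g v w k → DerivesIn g u w (k + 1)

lemma DerivesIn.toDerives {u w : List (Symbol A g.NT)} {k : ℕ}
    (h : DerivesIn g u w k) : g.Derives u w := by
  induction h with
  | refl => exact Derives.refl _
  | head h _ ih => exact h.trans_derives ih

lemma derives_iff_derivesIn {u w : List (Symbol A g.NT)} :
    g.Derives u w ↔ ∃ k, DerivesIn g u w k := by
  constructor
  · intro h
    induction h using Relation.ReflTransGen.head_induction_on with
    | refl => exact ⟨0, DerivesIn.refl w⟩
    | head hp _ ih => obtain ⟨k, hk⟩ := ih; exact ⟨k + 1, DerivesIn.head hp hk⟩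
  · rintro ⟨k, hk⟩; exact hk.toDerives

lemma DerivesIn.trans {u v w : List (Symbol A g.NT)} {k l : ℕ}
    (h1 : DerivesIn g u v k) (h2 : DerivesIn g v w l) : DerivesIn g u w (k + l) := by
  induction h1 with
  | refl => simpa using h2
  | head hp _ ih => exact Nat.add_right_comm _ _ _ ▸ DerivesIn.head hp (ih h2)

lemma DerivesIn.append_left {u v : List (Symbol A g.NT)} {k : ℕ}
    (h : DerivesIn g u v k) (p : List (Symbol A g.NT)) :
    DerivesIn g (p ++ u) (p ++ v) k := by
  induction h with
  | refl => exact DerivesIn.refl _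
  | head hp _ ih => exact DerivesIn.head (hp.append_left p) ih

lemma DerivesIn.append_right {u v : List (Symbol A g.NT)} {k : ℕ}
    (h : DerivesIn g u v k) (p : List (Symbol A g.NT)) :
    DerivesIn g (u ++ p) (v ++ p) k := by
  induction h with
  | refl => exact DerivesIn.refl _
  | head hp _ ih => exact DerivesIn.head (hp.append_right p) ih

lemma DerivesIn.zero_inv {u w : List (Symbol A g.NT)} (h : DerivesIn g u w 0) : u = w := by
  cases h; rfl

lemma DerivesIn.succ_inv {u w : List (Symbol A g.NT)} {k : ℕ} (h : DerivesIn g u w (k + 1)) :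
    ∃ v, g.Produces u v ∧ DerivesIn g v w k := by
  cases h with
  | head hp ht => exact ⟨_, hp, ht⟩

/-- Combine two derivations side by side. -/

lemma Derives.append_both {u v x y : List (Symbol A g.NT)}
    (h1 : g.Derives u v) (h2 : g.Derives x y) : g.Derives (u ++ x) (v ++ y) :=
  (h1.append_right x).trans (h2.append_left v)

/-- A string of terminals derives only itself. -/
lemma derivesIn_terminal {w : List A} {z : List (Symbol A g.NT)} {k : ℕ}
    (h : DerivesIn g (w.map Symbol.terminal) z k) : z = w.map Symbol.terminal := by
  cases h with
  | refl => rfl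
  | head hp _ =>
    exfalso
    obtain ⟨r, _, hr⟩ := hp
    obtain ⟨p, q, hu, -⟩ := hr.exists_parts
    have : Symbol.nonterminal r.input ∈ w.map Symbol.terminal := by
      rw [hu]; simp
    simp only [List.mem_map] at this
    obtain ⟨a, -, ha⟩ := this
    cases ha

/-- Rewriting a single nonterminal. -/
lemma rewrites_singleton {r : ContextFreeRule A g.NT} {X : g.NT} {v : List (Symbol A g.NT)}
    (h : r.Rewrites [Symbol.nonterminal X] v) : r.input = X ∧ v = r.output := by
  obtain ⟨p, q, hu, hv⟩ := h.exists_parts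
  match p, q, hu with
  | [], [], hu =>
    simp only [List.nil_append, List.append_nil] at hu hv
    exact ⟨(Symbol.nonterminal.inj (List.singleton_injective hu)).symm, hv⟩
  | [], (x :: q), hu => simp at hu
  | (x :: p), q, hu =>
    exfalso
    simp only [List.cons_append, List.cons.injEq] at hu
    have := hu.2
    simp at this

/-- Splitting a counted derivation from a concatenation. -/
lemma DerivesIn.append_split {α β w : List (Symbol A g.NT)} {k : ℕ}
    (h : DerivesIn g (α ++ β) w k) :
    ∃ w₁ w₂ k₁ k₂, w = w₁ ++ w₂ ∧ k₁ + k₂ = k ∧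
      DerivesIn g α w₁ k₁ ∧ DerivesIn g β w₂ k₂ := by
  induction k generalizing α β with
  | zero =>
    cases h with
    | refl => exact ⟨α, β, 0, 0, rfl, rfl, DerivesIn.refl _, DerivesIn.refl _⟩
  | succ k ih =>
    cases h with
    | head hp htail =>
      obtain ⟨r, hrmem, hr⟩ := hp
      obtain ⟨p, q, hu, hv⟩ := hr.exists_parts
      rw [List.append_assoc] at hu
      rcases List.append_eq_append_iff.mp hu.symm with ⟨a', hp', hβ⟩ | ⟨c', hα, hq⟩
      · -- α = p ++ a', [nt] ++ q = a' ++ β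
        rcases a' with _ | ⟨s, a''⟩
        · -- a' = [] : nonterminal is in β
          simp only [List.append_nil] at hp'
          simp only [List.nil_append] at hβ
          subst hp'
          have hstep : g.Produces β (r.output ++ q) := by
            rw [← hβ]
            exact ⟨r, hrmem, r.rewrites_of_exists_parts [] q⟩
          have htail' : DerivesIn g (α ++ (r.output ++ q)) w k := by
            have he : α ++ r.output ++ q = α ++ (r.output ++ q) := by simp
            rwa [hv, he] at htail
          obtain ⟨w₁, w₂, k₁, k₂, hw, hk, h1, h2⟩ := ih htail'
          exact ⟨w₁, w₂, k₁, k₂ + 1, hw, by omega, h1, DerivesIn.head hstep h2⟩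
        · -- a' = s :: a'' : nonterminal in α
          simp only [List.singleton_append, List.cons_append, List.cons.injEq] at hβ
          obtain ⟨hs, hq'⟩ := hβ
          simp only [List.nil_append] at hq'
          subst hs hp'
          have hstep : g.Produces (p ++ [Symbol.nonterminal r.input] ++ a'')
              (p ++ r.output ++ a'') := ⟨r, hrmem, r.rewrites_of_exists_parts p a''⟩
          have htail' : DerivesIn g ((p ++ r.output ++ a'') ++ β) w k := by
            have he : p ++ r.output ++ q = (p ++ r.output ++ a'') ++ β := by
              simp [hq']
            rwa [hv, he] at htail
          obtain ⟨w₁, w₂, k₁, k₂, hw, hk, h1, h2⟩ := ih htail'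
          refine ⟨w₁, w₂, k₁ + 1, k₂, hw, by omega, ?_, h2⟩
          have he : p ++ Symbol.nonterminal r.input :: a'' =
              p ++ [Symbol.nonterminal r.input] ++ a'' := by simp
          rw [he]
          exact DerivesIn.head hstep h1
      · -- p = α ++ c', β = c' ++ [nt] ++ q : nonterminal in β
        subst hα
        have hstep : g.Produces β (c' ++ r.output ++ q) := by
          rw [hq, ← List.append_assoc]
          exact ⟨r, hrmem, r.rewrites_of_exists_parts c' q⟩
        have htail' : DerivesIn g (α ++ (c' ++ r.output ++ q)) w k := by
          have he : (α ++ c') ++ r.output ++ q = α ++ (c' ++ r.output ++ q) := by simp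
          rwa [hv, he] at htail
        obtain ⟨w₁, w₂, k₁, k₂, hw, hk, h1, h2⟩ := ih htail'
        exact ⟨w₁, w₂, k₁, k₂ + 1, hw, by omega, h1, DerivesIn.head hstep h2⟩

end RQuot
section Part2
namespace RQuot
open ContextFreeGrammar

attribute [local instance] Classical.propDecidable

variable {A : Type} {σ : Type} [Fintype σ]

/-- Lift a symbol to the "plain" copy of the nonterminals in the quotient grammar. -/
def li {N : Type} : Symbol A N → Symbol A (Option (N ⊕ N × σ × σ))
  | .terminal a => .terminal a
  | .nonterminal n => .nonterminal (some (Sum.inl n))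

lemma li_injective {N : Type} : Function.Injective (li (A := A) (σ := σ) (N := N)) := by
  intro s t h
  cases s <;> cases t <;> simp_all [li]

lemma map_li_terminal {N : Type} (u : List A) :
    (u.map Symbol.terminal).map (li (σ := σ) (N := N)) = u.map Symbol.terminal := by
  induction u with
  | nil => rfl
  | cons a u ih => simp [li, ih]

/-- `Erasable g M y q q'` : the symbol string `y` derives some terminal word moving
the DFA `M` from `q` to `q'`. -/
def Erasable (g : ContextFreeGrammar A) (M : DFA A σ) (y : List (Symbol A g.NT))
    (q q' : σ) : Prop :=
  ∃ v : List A, g.Derives y (v.map Symbol.terminal) ∧ M.evalFrom q v = q'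

variable (g : ContextFreeGrammar A) (M : DFA A σ)

/-- plain copy of a rule of `g` -/
def plainRule (r : ContextFreeRule A g.NT) :
    ContextFreeRule A (Option (g.NT ⊕ g.NT × σ × σ)) :=
  ⟨some (Sum.inl r.input), r.output.map li⟩

/-- rule for a split exactly at a symbol boundary: keep first `i` symbols, rest erasable -/
def ruleA (r : ContextFreeRule A g.NT) (i : ℕ) (q q' : σ) :
    ContextFreeRule A (Option (g.NT ⊕ g.NT × σ × σ)) :=
  ⟨some (Sum.inr (r.input, q, q')), (r.output.take i).map li⟩

/-- rule for a split strictly inside the nonterminal at position `i` -/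
def ruleB (r : ContextFreeRule A g.NT) (i : ℕ) (m : g.NT) (q q' q'' : σ) :
    ContextFreeRule A (Option (g.NT ⊕ g.NT × σ × σ)) :=
  ⟨some (Sum.inr (r.input, q, q'')),
    (r.output.take i).map li ++ [Symbol.nonterminal (some (Sum.inr (m, q, q')))]⟩

def startRule (n : g.NT) (q q' : σ) :
    ContextFreeRule A (Option (g.NT ⊕ g.NT × σ × σ)) :=
  ⟨none, [Symbol.nonterminal (some (Sum.inr (n, q, q')))]⟩

/-- Target finset for the "straddle" rules at position `i` of rule `r`. -/
noncomputable def bTarget (r : ContextFreeRule A g.NT) (i : ℕ) :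
    Finset (ContextFreeRule A (Option (g.NT ⊕ g.NT × σ × σ))) :=
  match r.output[i]? with
  | some (Symbol.nonterminal m) =>
    ((Finset.univ : Finset (σ × σ × σ)).filter fun p =>
      Erasable g M (r.output.drop (i + 1)) p.2.1 p.2.2).image
        fun p => ruleB g r i m p.1 p.2.1 p.2.2
  | _ => ∅

lemma mem_bTarget {r : ContextFreeRule A g.NT} {i : ℕ}
    {r' : ContextFreeRule A (Option (g.NT ⊕ g.NT × σ × σ))} :
    r' ∈ bTarget g M r i ↔ ∃ m, r.output[i]? = some (Symbol.nonterminal m) ∧ ∃ q q' q'',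
      Erasable g M (r.output.drop (i + 1)) q' q'' ∧ r' = ruleB g r i m q q' q'' := by
  unfold bTarget
  split
  next m heq =>
    simp only [Finset.mem_image, Finset.mem_filter, Finset.mem_univ, true_and]
    constructor
    · rintro ⟨⟨q, q', q''⟩, hE, he⟩
      exact ⟨m, heq, q, q', q'', hE, he.symm⟩
    · rintro ⟨m', hm', q, q', q'', hE, he⟩
      rw [heq] at hm'
      obtain rfl : m = m' := by
        simpa using hm'
      exact ⟨⟨q, q', q''⟩, hE, he.symm⟩
  next hne =>
    simp only [Finset.notMem_empty, false_iff]
    rintro ⟨m, hm, -⟩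
    exact hne m hm

/-- The quotient grammar. -/
@[reducible] noncomputable def qg : ContextFreeGrammar A where
  NT := Option (g.NT ⊕ g.NT × σ × σ)
  initial := none
  rules :=
    g.rules.image (plainRule g) ∪
    g.rules.biUnion (fun r => (Finset.range (r.output.length + 1)).biUnion fun i =>
      ((Finset.univ : Finset (σ × σ)).filter fun p =>
        Erasable g M (r.output.drop i) p.1 p.2).image fun p => ruleA g r i p.1 p.2) ∪
    g.rules.biUnion (fun r => (Finset.range r.output.length).biUnion fun i =>
      bTarget g M r i) ∪
    ((Finset.univ : Finset σ).filter fun q' => q' ∈ M.accept).image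
      (startRule g g.initial M.start)

lemma mem_qg_rules {r' : ContextFreeRule A (Option (g.NT ⊕ g.NT × σ × σ))} :
    r' ∈ (qg g M).rules ↔
      (∃ r ∈ g.rules, r' = plainRule g r) ∨
      (∃ r ∈ g.rules, ∃ i ≤ r.output.length, ∃ q q',
        Erasable g M (r.output.drop i) q q' ∧ r' = ruleA g r i q q') ∨
      (∃ r ∈ g.rules, ∃ i m, r.output[i]? = some (Symbol.nonterminal m) ∧ ∃ q q' q'',
        Erasable g M (r.output.drop (i + 1)) q' q'' ∧ r' = ruleB g r i m q q' q'') ∨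
      (∃ q', q' ∈ M.accept ∧ r' = startRule g g.initial M.start q') := by
  simp only [qg, Finset.mem_union, Finset.mem_image, Finset.mem_biUnion, Finset.mem_filter,
    Finset.mem_range, Finset.mem_univ, true_and, mem_bTarget]
  constructor
  · rintro (((⟨r, hr, he⟩ | ⟨r, hr, i, hi, ⟨q, q'⟩, hE, he⟩) | ⟨r, hr, i, hi, h⟩) |
      ⟨q', h1, h2⟩)
    · exact Or.inl ⟨r, hr, he.symm⟩
    · exact Or.inr (Or.inl ⟨r, hr, i, by omega, q, q', hE, he.symm⟩)
    · obtain ⟨m, hg, q, q', q'', hE, he⟩ := h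
      exact Or.inr (Or.inr (Or.inl ⟨r, hr, i, m, hg, q, q', q'', hE, he⟩))
    · exact Or.inr (Or.inr (Or.inr ⟨q', h1, h2.symm⟩))
  · rintro (⟨r, hr, he⟩ | ⟨r, hr, i, hi, q, q', hE, he⟩ | ⟨r, hr, i, m, hg, q, q', q'', hE, he⟩ |
      ⟨q', h1, h2⟩)
    · exact Or.inl (Or.inl (Or.inl ⟨r, hr, he.symm⟩))
    · exact Or.inl (Or.inl (Or.inr ⟨r, hr, i, by omega, ⟨q, q'⟩, hE, he.symm⟩))
    · refine Or.inl (Or.inr ⟨r, hr, i, (List.getElem?_eq_some_iff.mp hg).1,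
        m, hg, q, q', q'', hE, he⟩)
    · exact Or.inr ⟨q', h1, h2.symm⟩

end RQuot
end Part2
section Part3
namespace RQuot
open ContextFreeGrammar

attribute [local instance] Classical.propDecidable

variable {A : Type} {σ : Type} [Fintype σ] {g : ContextFreeGrammar A} {M : DFA A σ}

lemma map_li_eq_append_nt {p q : List (Symbol A (Option (g.NT ⊕ g.NT × σ × σ)))}
    {x0 : List (Symbol A g.NT)} {n : g.NT}
    (h : x0.map li = p ++ [Symbol.nonterminal (some (Sum.inl n))] ++ q) :
    ∃ p0 q0, x0 = p0 ++ [Symbol.nonterminal n] ++ q0 ∧ p = p0.map li ∧ q = q0.map li := by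
  rw [List.append_assoc] at h
  obtain ⟨p0, rest, hx0, hp, hrest⟩ := List.map_eq_append_iff.mp h
  obtain ⟨mid, q0, hrest', hmid, hq⟩ := List.map_eq_append_iff.mp hrest
  obtain ⟨s, rfl⟩ : ∃ s, mid = [s] := by
    cases mid with
    | nil => simp at hmid
    | cons a l =>
      cases l with
      | nil => exact ⟨a, rfl⟩
      | cons b l' => simp at hmid
  have hs : s = Symbol.nonterminal n := by
    cases s with
    | terminal a => simp [li] at hmid
    | nonterminal m =>
      simp only [List.map_cons, List.map_nil, li, List.cons.injEq, and_true] at hmid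
      obtain rfl : m = n := by
        have := Symbol.nonterminal.inj hmid
        simpa using this
      rfl
  subst hs
  exact ⟨p0, q0, by rw [hx0, hrest']; simp, hp.symm, hq.symm⟩

/-- Plain simulation, backward: `g`-derivations lift into the quotient grammar. -/
lemma plain_bwd {x y : List (Symbol A g.NT)} (h : g.Derives x y) :
    (qg g M).Derives (x.map li) (y.map li) := by
  induction h using Relation.ReflTransGen.head_induction_on with
  | refl => exact Derives.refl _
  | head hp _ ih =>
    obtain ⟨r, hrmem, hr⟩ := hp
    obtain ⟨p, q, hu, hv⟩ := hr.exists_parts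
    refine Relation.ReflTransGen.head ⟨plainRule g r, ?_, ?_⟩ ih
    · exact (mem_qg_rules g M).mpr (Or.inl ⟨r, hrmem, rfl⟩)
    · have h1 := congrArg (List.map (li (σ := σ))) hu
      have h2 := congrArg (List.map (li (σ := σ))) hv
      simp only [List.map_append] at h1 h2
      rw [h1, h2]
      have : (List.map li [Symbol.nonterminal r.input] :
          List (Symbol A (Option (g.NT ⊕ g.NT × σ × σ)))) =
          [Symbol.nonterminal (some (Sum.inl r.input))] := by simp [li]
      rw [this]
      exact (plainRule g r).rewrites_of_exists_parts (p.map li) (q.map li)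

/-- Inputs of the various rules. -/
lemma input_analysis {r' : ContextFreeRule A (Option (g.NT ⊕ g.NT × σ × σ))}
    (hmem : r' ∈ (qg g M).rules) {n : g.NT} (hin : r'.input = some (Sum.inl n)) :
    ∃ r ∈ g.rules, r.input = n ∧ r' = plainRule g r := by
  rcases (mem_qg_rules g M).mp hmem with ⟨r, hr, rfl⟩ | ⟨r, hr, i, hi, q, q', hE, rfl⟩ |
    ⟨r, hr, i, m, hg, q, q', q'', hE, rfl⟩ | ⟨q', h1, rfl⟩
  · refine ⟨r, hr, ?_, rfl⟩
    simpa [plainRule] using hin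
  · simp [ruleA] at hin
  · simp [ruleB] at hin
  · simp [startRule] at hin

/-- Plain simulation, forward. -/
lemma plain_fwd {x : List (Symbol A g.NT)} {w : List A} {k : ℕ}
    (h : DerivesIn (qg g M) (x.map li) (w.map Symbol.terminal) k) :
    g.Derives x (w.map Symbol.terminal) := by
  induction k generalizing x with
  | zero =>
    have hw := h.zero_inv
    have : x.map (li (σ := σ)) = (w.map Symbol.terminal).map (li (σ := σ)) := by
      rw [map_li_terminal]; exact hw
    rw [List.map_injective_iff.mpr li_injective this]
  | succ k ih =>
    obtain ⟨mid, hp, htail⟩ := h.succ_inv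
    obtain ⟨r', hrmem, hr⟩ := hp
    obtain ⟨p, q, hu, hv⟩ := hr.exists_parts
    have hin : ∃ n : g.NT, r'.input = some (Sum.inl n) := by
      have : Symbol.nonterminal r'.input ∈ x.map li := by rw [hu]; simp
      simp only [List.mem_map] at this
      obtain ⟨s, -, hs⟩ := this
      cases s with
      | terminal a => exact absurd hs (by simp [li])
      | nonterminal m => exact ⟨m, by simpa [li] using hs.symm⟩
    obtain ⟨n, hn⟩ := hin
    obtain ⟨r, hrg, hrn, rfl⟩ := input_analysis hrmem hn
    rw [hn] at hu
    obtain ⟨p0, q0, hx0, rfl, rfl⟩ := map_li_eq_append_nt hu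
    have htail' : DerivesIn (qg g M) ((p0 ++ r.output ++ q0).map li)
        (w.map Symbol.terminal) k := by
      have he : (p0 ++ r.output ++ q0).map (li (σ := σ))
          = p0.map li ++ (plainRule (σ := σ) g r).output ++ q0.map li := by
        simp [plainRule]
      rw [he, ← hv]
      exact htail
    have hder := ih htail'
    refine Relation.ReflTransGen.head ⟨r, hrg, ?_⟩ hder
    rw [hx0, ← hrn]
    exact r.rewrites_of_exists_parts p0 q0
end RQuot
end Part3
section Part4
namespace RQuot
open ContextFreeGrammar

variable {A : Type} {g : ContextFreeGrammar A}

/-- Where does a split of the derived word land relative to the deriving string? -/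
lemma straddle {γ : List (Symbol A g.NT)} {u v : List A} {m : ℕ}
    (h : DerivesIn g γ ((u ++ v).map Symbol.terminal) m) :
    (∃ x y, γ = x ++ y ∧ g.Derives x (u.map Symbol.terminal) ∧
      g.Derives y (v.map Symbol.terminal)) ∨
    (∃ x, ∃ c : g.NT, ∃ y u₁ u₂ v₁ v₂ m', γ = x ++ [Symbol.nonterminal c] ++ y ∧
      u = u₁ ++ u₂ ∧ v = v₁ ++ v₂ ∧ m' ≤ m ∧
      DerivesIn g [Symbol.nonterminal c] ((u₂ ++ v₁).map Symbol.terminal) m' ∧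
      g.Derives x (u₁.map Symbol.terminal) ∧ g.Derives y (v₂.map Symbol.terminal)) := by
  induction γ generalizing u m with
  | nil =>
    have h0 := derivesIn_terminal (w := ([] : List A)) (by simpa using h)
    simp only [List.map_nil, List.map_eq_nil_iff, List.append_eq_nil_iff] at h0
    obtain ⟨rfl, rfl⟩ := h0
    exact Or.inl ⟨[], [], rfl, Relation.ReflTransGen.refl, Relation.ReflTransGen.refl⟩
  | cons s γ' ih =>
    rcases eq_or_ne u [] with rfl | hu
    · refine Or.inl ⟨[], s :: γ', rfl, Relation.ReflTransGen.refl, ?_⟩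
      simpa using h.toDerives
    · have h' : DerivesIn g ([s] ++ γ') ((u ++ v).map Symbol.terminal) m := by simpa using h
      obtain ⟨w₁, w₂, k₁, k₂, hw, hk, h1, h2⟩ := h'.append_split
      obtain ⟨z₁, z₂, hz, hw1, hw2⟩ := List.map_eq_append_iff.mp hw
      subst hw1 hw2
      rcases List.append_eq_append_iff.mp hz with ⟨a', hz1, hv⟩ | ⟨c', hu', hz2⟩
      · -- z₁ = u ++ a', v = a' ++ z₂ : split inside the yield of s
        subst hz1 hv
        cases s with
        | terminal t =>
          have h0 : (u ++ a').map (Symbol.terminal (N := g.NT)) = [t].map Symbol.terminal := by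
            have hz := derivesIn_terminal (w := [t]) (by simpa using h1)
            simpa using hz
          have hsing : u ++ a' = [t] :=
            List.map_injective_iff.mpr (fun a b hab => Symbol.terminal.inj hab) h0
          rcases u with _ | ⟨a, u'⟩
          · exact absurd rfl hu
          · have hh : a = t ∧ u' = [] ∧ a' = [] := by
              have h3 : a = t ∧ u' ++ a' = [] := by simpa using hsing
              refine ⟨h3.1, ?_, ?_⟩ <;> simp_all
            obtain ⟨rfl, rfl, rfl⟩ := hh
            refine Or.inl ⟨[Symbol.terminal a], γ', rfl, Relation.ReflTransGen.refl, ?_⟩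
            simpa using h2.toDerives
        | nonterminal c =>
          refine Or.inr ⟨[], c, γ', [], u, a', z₂, k₁, rfl, rfl, rfl, by omega, h1, ?_, ?_⟩
          · exact Relation.ReflTransGen.refl
          · exact h2.toDerives
      · -- u = z₁ ++ c', z₂ = c' ++ v : recurse into γ'
        subst hu' hz2
        have h2' : DerivesIn g γ' ((c' ++ v).map Symbol.terminal) k₂ := h2
        rcases ih h2' with ⟨x', y', hγ', hx', hy'⟩ |
          ⟨x', c, y', u₁', u₂', v₁, v₂, m', hγ', hu'', hv'', hm', hd, hx', hy'⟩
        · refine Or.inl ⟨s :: x', y', by simp [hγ'], ?_, hy'⟩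
          have : (s :: x') = [s] ++ x' := rfl
          rw [this, List.map_append]
          exact Derives.append_both h1.toDerives hx'
        · refine Or.inr ⟨s :: x', c, y', z₁ ++ u₁', u₂', v₁, v₂, m', by simp [hγ'],
            by rw [hu'', List.append_assoc], hv'', by omega, hd, ?_, hy'⟩
          have hc : (s :: x') = [s] ++ x' := rfl
          rw [hc, List.map_append]
          exact Derives.append_both h1.toDerives hx'

end RQuot
end Part4
section Part5
namespace RQuot
open ContextFreeGrammar

attribute [local instance] Classical.propDecidable

variable {A : Type} {σ : Type} [Fintype σ] {g : ContextFreeGrammar A} {M : DFA A σ}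

/-- Main forward lemma: derivations in the quotient grammar from an annotated nonterminal
yield quotients of `g`-derivations. -/
lemma main_fwd : ∀ k : ℕ, ∀ {n : g.NT} {q q' : σ} {u : List A},
    DerivesIn (qg g M) [Symbol.nonterminal (some (Sum.inr (n, q, q')))]
      (u.map Symbol.terminal) k →
    ∃ v, g.Derives [Symbol.nonterminal n] ((u ++ v).map Symbol.terminal) ∧
      M.evalFrom q v = q' := by
  intro k
  induction k using Nat.strong_induction_on with
  | _ k ih =>
    intro n q q' u h
    match k with
    | 0 =>
      exfalso
      have h0 := h.zero_inv
      cases u <;> simp at h0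
    | k' + 1 =>
      obtain ⟨mid, hp, htail⟩ := h.succ_inv
      obtain ⟨r', hrmem, hr⟩ := hp
      obtain ⟨hin, rfl⟩ := rewrites_singleton hr
      rcases (mem_qg_rules g M).mp hrmem with ⟨r, hrg, rfl⟩ |
        ⟨r, hrg, i, hi, qa, qa', hE, rfl⟩ | ⟨r, hrg, i, m, hg', qa, qb, qc, hE, rfl⟩ |
        ⟨qa, -, rfl⟩
      · simp [plainRule] at hin
      · -- ruleA
        simp only [ruleA, Option.some.injEq, Sum.inr.injEq, Prod.mk.injEq] at hin
        obtain ⟨rfl, rfl, rfl⟩ := hin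
        have hder1 : g.Derives (r.output.take i) (u.map Symbol.terminal) :=
          plain_fwd htail
        obtain ⟨v, hderv, hq⟩ := hE
        refine ⟨v, ?_, hq⟩
        have hstep : g.Produces [Symbol.nonterminal r.input] r.output :=
          ⟨r, hrg, ContextFreeRule.Rewrites.input_output⟩
        refine hstep.trans_derives ?_
        have hout : r.output = r.output.take i ++ r.output.drop i :=
          (List.take_append_drop i r.output).symm
        rw [hout, List.map_append]
        exact Derives.append_both hder1 hderv
      · -- ruleB
        simp only [ruleB, Option.some.injEq, Sum.inr.injEq, Prod.mk.injEq] at hin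
        obtain ⟨rfl, rfl, rfl⟩ := hin
        obtain ⟨w₁, w₂, k₁, k₂, hw, hk, h1, h2⟩ := htail.append_split
        obtain ⟨u₁, u₂, rfl, hw1, hw2⟩ := List.map_eq_append_iff.mp hw
        subst hw1 hw2
        have hder1 : g.Derives (r.output.take i) (u₁.map Symbol.terminal) :=
          plain_fwd h1
        obtain ⟨v₁, hder2, hq1⟩ := ih k₂ (by omega) h2
        obtain ⟨v₂, hder3, hq2⟩ := hE
        refine ⟨v₁ ++ v₂, ?_, ?_⟩
        · have hstep : g.Produces [Symbol.nonterminal r.input] r.output :=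
            ⟨r, hrg, ContextFreeRule.Rewrites.input_output⟩
          refine hstep.trans_derives ?_
          obtain ⟨hilt, hie⟩ := List.getElem?_eq_some_iff.mp hg'
          have hout : r.output = r.output.take i ++ [Symbol.nonterminal m]
              ++ r.output.drop (i + 1) := by
            conv_lhs => rw [← List.take_append_drop i r.output]
            rw [← List.getElem_cons_drop (as := r.output) (i := i) hilt, hie]
            simp
          rw [hout]
          have hgoal : ((u₁ ++ u₂) ++ (v₁ ++ v₂)).map (Symbol.terminal (N := g.NT))
              = u₁.map Symbol.terminal ++ ((u₂ ++ v₁).map Symbol.terminal)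
                ++ v₂.map Symbol.terminal := by
            simp
          rw [hgoal]
          exact Derives.append_both (Derives.append_both hder1 hder2) hder3
        · rw [DFA.evalFrom_of_append, hq1, hq2]
      · simp [startRule] at hin

/-- Main backward lemma. -/
lemma main_bwd : ∀ k : ℕ, ∀ {n : g.NT} {u v : List A} {q : σ},
    DerivesIn g [Symbol.nonterminal n] ((u ++ v).map Symbol.terminal) k →
    (qg g M).Derives
      [Symbol.nonterminal (some (Sum.inr (n, q, M.evalFrom q v)))]
      (u.map Symbol.terminal) := by
  intro k
  induction k using Nat.strong_induction_on with
  | _ k ih =>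
    intro n u v q h
    match k with
    | 0 =>
      exfalso
      have h0 := h.zero_inv
      cases u <;> cases v <;> simp at h0
    | k' + 1 =>
      obtain ⟨mid, hp, htail⟩ := h.succ_inv
      obtain ⟨r, hrg, hr⟩ := hp
      obtain ⟨hin, rfl⟩ := rewrites_singleton hr
      subst hin
      rcases straddle htail with ⟨x, y, hxy, hx, hy⟩ |
        ⟨x, c, y, u₁, u₂, v₁, v₂, m', hxy, rfl, rfl, hm', hd, hx, hy⟩
      · -- boundary split: use ruleA
        have hmem : ruleA g r x.length q (M.evalFrom q v) ∈ (qg g M).rules := by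
          refine (mem_qg_rules g M).mpr (Or.inr (Or.inl
            ⟨r, hrg, x.length, ?_, q, M.evalFrom q v, ⟨v, ?_, rfl⟩, rfl⟩))
          · rw [hxy]; simp
          · rw [hxy, List.drop_left]
            exact hy
        have hstep : (qg g M).Produces
            [Symbol.nonterminal (some (Sum.inr (r.input, q, M.evalFrom q v)))]
            (x.map li) := by
          refine ⟨ruleA g r x.length q (M.evalFrom q v), hmem, ?_⟩
          have hout : (ruleA (σ := σ) g r x.length q (M.evalFrom q v)).output = x.map li := by
            simp [ruleA, hxy, List.take_left]
          rw [← hout]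
          exact ContextFreeRule.Rewrites.input_output
        refine hstep.trans_derives ?_
        have := plain_bwd (M := M) hx
        rwa [map_li_terminal] at this
      · -- straddle split: use ruleB
        set q₁ := M.evalFrom q v₁ with hq₁
        have hvv : M.evalFrom q (v₁ ++ v₂) = M.evalFrom q₁ v₂ := by
          rw [DFA.evalFrom_of_append]
        have hgetp : r.output[x.length]? = some (Symbol.nonterminal c) := by
          rw [hxy, List.append_assoc, List.getElem?_append_right (le_refl x.length)]
          simp
        have hmem : ruleB g r x.length c q q₁ (M.evalFrom q₁ v₂) ∈ (qg g M).rules := by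
          refine (mem_qg_rules g M).mpr (Or.inr (Or.inr (Or.inl
            ⟨r, hrg, x.length, c, hgetp, q, q₁, M.evalFrom q₁ v₂, ⟨v₂, ?_, rfl⟩, rfl⟩)))
          have hdrop : r.output.drop (x.length + 1) = y := by
            rw [hxy]
            rw [List.drop_left' (by simp)]
          rw [hdrop]
          exact hy
        have hstep : (qg g M).Produces
            [Symbol.nonterminal (some (Sum.inr (r.input, q, M.evalFrom q (v₁ ++ v₂))))]
            (x.map li ++ [Symbol.nonterminal (some (Sum.inr (c, q, q₁)))]) := by
          rw [hvv]
          refine ⟨ruleB g r x.length c q q₁ (M.evalFrom q₁ v₂), hmem, ?_⟩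
          have hto : (ruleB (σ := σ) g r x.length c q q₁ (M.evalFrom q₁ v₂)).output
              = x.map li ++ [Symbol.nonterminal (some (Sum.inr (c, q, q₁)))] := by
            simp [ruleB, hxy, List.take_left]
          rw [← hto]
          exact ContextFreeRule.Rewrites.input_output
        refine hstep.trans_derives ?_
        have hleft : (qg g M).Derives (x.map li) (u₁.map Symbol.terminal) := by
          have := plain_bwd (M := M) hx
          rwa [map_li_terminal] at this
        have hright := ih m' (by omega) (v := v₁) (q := q) hd
        rw [List.map_append]
        exact Derives.append_both hleft hright

end RQuot
end Part5
section Part6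
open ContextFreeGrammar RQuot

/-- If `L` is a context-free language and `R` is a regular language over a finite
alphabet `A`, then the right quotient `L / R = { l | ∃ r ∈ R, l ++ r ∈ L }`
is context-free. -/
theorem rightQuotient_of_contextFree_regular_isContextFree
    {A : Type} [Fintype A] (L R : Language A)
    (hL : L.IsContextFree) (hR : R.IsRegular) :
    Language.IsContextFree {l : List A | ∃ r ∈ R, l ++ r ∈ L} := by
  classical
  obtain ⟨g, rfl⟩ := hL
  obtain ⟨σ, fσ, M, rfl⟩ := hR
  refine ⟨qg g M, ?_⟩
  ext w
  rw [ContextFreeGrammar.mem_language_iff]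
  constructor
  · intro hgen
    obtain ⟨k, hk⟩ := derives_iff_derivesIn.mp hgen
    match k with
    | 0 =>
      exfalso
      have h0 := hk.zero_inv
      cases w <;> simp at h0
    | k' + 1 =>
      obtain ⟨mid, hp, htail⟩ := hk.succ_inv
      obtain ⟨r', hrmem, hr⟩ := hp
      obtain ⟨hin, rfl⟩ := rewrites_singleton hr
      rcases (mem_qg_rules g M).mp hrmem with ⟨r, hrg, rfl⟩ |
        ⟨r, hrg, i, hi, qa, qa', hE, rfl⟩ | ⟨r, hrg, i, m, hg', qa, qb, qc, hE, rfl⟩ |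
        ⟨f, hf, rfl⟩
      · simp [plainRule] at hin
      · simp [ruleA] at hin
      · simp [ruleB] at hin
      · have htail' : DerivesIn (qg g M)
            [Symbol.nonterminal (some (Sum.inr (g.initial, M.start, f)))]
            (w.map Symbol.terminal) k' := htail
        obtain ⟨v, hder, heval⟩ := main_fwd k' htail'
        refine ⟨v, ?_, ?_⟩
        · rw [DFA.mem_accepts]
          show M.evalFrom M.start v ∈ M.accept
          rw [heval]
          exact hf
        · show (w ++ v) ∈ g.language
          rw [ContextFreeGrammar.mem_language_iff]
          exact hder
  · rintro ⟨v, hvR, hL'⟩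
    have hL2 : (w ++ v) ∈ g.language := hL'
    rw [ContextFreeGrammar.mem_language_iff] at hL2
    obtain ⟨k, hk⟩ := derives_iff_derivesIn.mp hL2
    have hbwd := main_bwd (M := M) k (q := M.start) hk
    have hf : M.evalFrom M.start v ∈ M.accept := by
      rw [DFA.mem_accepts] at hvR
      exact hvR
    have hmem : startRule g g.initial M.start (M.evalFrom M.start v) ∈ (qg g M).rules :=
      (mem_qg_rules g M).mpr (Or.inr (Or.inr (Or.inr ⟨M.evalFrom M.start v, hf, rfl⟩)))
    have hstep : (qg g M).Produces [Symbol.nonterminal none]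
        [Symbol.nonterminal (some (Sum.inr (g.initial, M.start, M.evalFrom M.start v)))] :=
      ⟨startRule g g.initial M.start (M.evalFrom M.start v), hmem,
        ContextFreeRule.Rewrites.input_output⟩
    exact hstep.trans_derives hbwd

end Part6
end

section
/- If L is a context-free language and R is a regular language, then the left quotient R \ L = { r | ∃ l ∈ R, l ++ r ∈ L } is context-free. -/
namespace CFQuot

open ContextFreeGrammar

/-- Nonterminals of the quotient grammar. -/
inductive NT (N σ : Type) : Type
  | suf : N → NT N σ
  | pre : N → σ → σ → NT N σ
  | mid : N → σ → NT N σ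

variable {A N σ : Type}

/-- Map a symbol to its "suffix copy". -/
def sufSym : Symbol A N → Symbol A (NT N σ)
  | .terminal a => .terminal a
  | .nonterminal X => .nonterminal (.suf X)

/-- Map a sentential form to its "suffix copy". -/
def sufMap (α : List (Symbol A N)) : List (Symbol A (NT N σ)) := α.map sufSym

@[simp] lemma sufMap_nil : sufMap ([] : List (Symbol A N)) = ([] : List (Symbol A (NT N σ))) := rfl

@[simp] lemma sufMap_cons (x : Symbol A N) (α : List (Symbol A N)) :
    (sufMap (x :: α) : List (Symbol A (NT N σ))) = sufSym x :: sufMap α := rfl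

@[simp] lemma sufMap_append (α β : List (Symbol A N)) :
    (sufMap (α ++ β) : List (Symbol A (NT N σ))) = sufMap α ++ sufMap β := List.map_append ..

@[simp] lemma sufMap_map_terminal (w : List A) :
    (sufMap (w.map Symbol.terminal) : List (Symbol A (NT N σ))) = w.map Symbol.terminal := by
  induction w with
  | nil => rfl
  | cons a w ih => simp [sufMap, sufSym] at *

variable [Fintype σ] (M : DFA A σ)

open Classical in
/-- Annotated versions of a sentential form whose derived word is wholly inside the prefix,
taking the DFA from `p` to `q`. -/
noncomputable def annF : σ → List (Symbol A N) → σ → Finset (List (Symbol A (NT N σ)))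
  | p, [], q => if p = q then {[]} else ∅
  | p, Symbol.terminal a :: α, q => annF (M.step p a) α q
  | p, Symbol.nonterminal X :: α, q =>
      Finset.univ.biUnion fun s =>
        (annF s α q).image fun β => Symbol.nonterminal (NT.pre X p s) :: β

open Classical in
/-- Annotated versions of a sentential form containing the prefix/suffix boundary,
starting the DFA at `p`. -/
noncomputable def midF : σ → List (Symbol A N) → Finset (List (Symbol A (NT N σ)))
  | p, α =>
    (if p ∈ M.accept then {sufMap α} else ∅) ∪
    (match α with
    | [] => ∅
    | Symbol.terminal a :: α' => midF (M.step p a) α'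
    | Symbol.nonterminal X :: α' =>
        {Symbol.nonterminal (NT.mid X p) :: sufMap α'} ∪
        Finset.univ.biUnion fun s =>
          (midF s α').image fun β => Symbol.nonterminal (NT.pre X p s) :: β)


variable {M}

lemma mem_annF_nil {β : List (Symbol A (NT N σ))} {p q : σ} :
    β ∈ annF M p [] q ↔ p = q ∧ β = [] := by
  rw [annF]
  split <;> simp_all

lemma mem_annF_term {β : List (Symbol A (NT N σ))} {p q : σ} {a : A} {α : List (Symbol A N)} :
    β ∈ annF M p (Symbol.terminal a :: α) q ↔ β ∈ annF M (M.step p a) α q := by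
  rw [annF]

lemma mem_annF_nt {β : List (Symbol A (NT N σ))} {p q : σ} {X : N} {α : List (Symbol A N)} :
    β ∈ annF M p (Symbol.nonterminal X :: α) q ↔
      ∃ s β', β' ∈ annF M s α q ∧ β = Symbol.nonterminal (NT.pre X p s) :: β' := by
  rw [annF]
  simp [eq_comm, and_comm]

lemma mem_midF_nil {β : List (Symbol A (NT N σ))} {p : σ} :
    β ∈ midF M p [] ↔ p ∈ M.accept ∧ β = [] := by
  rw [midF.eq_def]
  split <;> split_ifs <;> simp_all

lemma mem_midF_term {β : List (Symbol A (NT N σ))} {p : σ} {a : A} {α : List (Symbol A N)} :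
    β ∈ midF M p (Symbol.terminal a :: α) ↔
      (p ∈ M.accept ∧ β = sufMap (Symbol.terminal a :: α)) ∨ β ∈ midF M (M.step p a) α := by
  rw [midF.eq_def]
  split <;> split_ifs <;> simp_all

lemma mem_midF_nt {β : List (Symbol A (NT N σ))} {p : σ} {X : N} {α : List (Symbol A N)} :
    β ∈ midF M p (Symbol.nonterminal X :: α) ↔
      (p ∈ M.accept ∧ β = sufMap (Symbol.nonterminal X :: α)) ∨
      β = Symbol.nonterminal (NT.mid X p) :: sufMap α ∨
      ∃ s β', β' ∈ midF M s α ∧ β = Symbol.nonterminal (NT.pre X p s) :: β' := by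
  rw [midF.eq_def]
  split <;> split_ifs <;> simp_all [eq_comm, and_comm] <;> tauto

lemma sufMap_mem_midF {p : σ} (hp : p ∈ M.accept) (α : List (Symbol A N)) :
    sufMap α ∈ midF M p α := by
  rw [midF.eq_def]
  simp [hp]


variable (M) in
open Classical in
/-- The quotient grammar. -/
noncomputable def quotG (g : ContextFreeGrammar.{0} A) : ContextFreeGrammar A where
  NT := NT g.NT σ
  initial := NT.mid g.initial M.start
  rules := g.rules.biUnion fun r =>
    ({⟨NT.suf r.input, sufMap r.output⟩} : Finset _) ∪
    (Finset.univ ×ˢ Finset.univ).biUnion (fun pq =>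
      (annF M pq.1 r.output pq.2).image fun β => ⟨NT.pre r.input pq.1 pq.2, β⟩) ∪
    (Finset.univ.biUnion fun p => (midF M p r.output).image fun β => ⟨NT.mid r.input p, β⟩)

variable {g : ContextFreeGrammar.{0} A}

@[simp] lemma quotG_initial : (quotG M g).initial = NT.mid g.initial M.start := rfl

lemma mem_quotG_rules {r' : ContextFreeRule A (NT g.NT σ)} :
    r' ∈ (quotG M g).rules ↔ ∃ r ∈ g.rules,
      (r' = ⟨NT.suf r.input, sufMap r.output⟩ ∨
       (∃ p q β, β ∈ annF M p r.output q ∧ r' = ⟨NT.pre r.input p q, β⟩) ∨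
       (∃ p β, β ∈ midF M p r.output ∧ r' = ⟨NT.mid r.input p, β⟩)) := by
  unfold quotG
  simp [quotG, eq_comm]

lemma suf_rule_mem {r : ContextFreeRule A g.NT} (hr : r ∈ g.rules) :
    (⟨NT.suf r.input, sufMap r.output⟩ : ContextFreeRule A (NT g.NT σ)) ∈ (quotG M g).rules :=
  mem_quotG_rules.2 ⟨r, hr, Or.inl rfl⟩

lemma pre_rule_mem {r : ContextFreeRule A g.NT} (hr : r ∈ g.rules) {p q : σ}
    {β : List (Symbol A (NT g.NT σ))} (hβ : β ∈ annF M p r.output q) :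
    (⟨NT.pre r.input p q, β⟩ : ContextFreeRule A (NT g.NT σ)) ∈ (quotG M g).rules :=
  mem_quotG_rules.2 ⟨r, hr, Or.inr (Or.inl ⟨p, q, β, hβ, rfl⟩)⟩

lemma mid_rule_mem {r : ContextFreeRule A g.NT} (hr : r ∈ g.rules) {p : σ}
    {β : List (Symbol A (NT g.NT σ))} (hβ : β ∈ midF M p r.output) :
    (⟨NT.mid r.input p, β⟩ : ContextFreeRule A (NT g.NT σ)) ∈ (quotG M g).rules :=
  mem_quotG_rules.2 ⟨r, hr, Or.inr (Or.inr ⟨p, β, hβ, rfl⟩)⟩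


variable (M g) in
/-- Semantics of a symbol of the quotient grammar. -/
def semS : Symbol A (NT g.NT σ) → Language A
  | .terminal a => {[a]}
  | .nonterminal (.suf X) =>
      {u | g.Derives [Symbol.nonterminal X] (u.map Symbol.terminal)}
  | .nonterminal (.pre X p q) =>
      {u | u = [] ∧ ∃ v, g.Derives [Symbol.nonterminal X] (v.map Symbol.terminal) ∧
        M.evalFrom p v = q}
  | .nonterminal (.mid X p) =>
      {u | ∃ l, g.Derives [Symbol.nonterminal X] ((l ++ u).map Symbol.terminal) ∧
        M.evalFrom p l ∈ M.accept}

variable (M g) in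
/-- Semantics of a sentential form of the quotient grammar. -/
def semL (α : List (Symbol A (NT g.NT σ))) : Language A := (α.map (semS M g)).prod

@[simp] lemma semL_nil : semL M g ([] : List (Symbol A (NT g.NT σ))) = 1 := rfl

lemma semL_cons (x : Symbol A (NT g.NT σ)) (α : List (Symbol A (NT g.NT σ))) :
    semL M g (x :: α) = semS M g x * semL M g α := by
  simp [semL]

lemma semL_append (α β : List (Symbol A (NT g.NT σ))) :
    semL M g (α ++ β) = semL M g α * semL M g β := by
  simp [semL]

lemma semL_singleton (x : Symbol A (NT g.NT σ)) : semL M g [x] = semS M g x := by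
  simp [semL_cons]

lemma self_mem_semL (w : List A) : w ∈ semL M g (w.map Symbol.terminal) := by
  induction w with
  | nil => simp [semL]
  | cons a w ih =>
      rw [List.map_cons, semL_cons]
      exact ⟨[a], rfl, w, ih, rfl⟩


@[simp] lemma evalFrom_cons (p : σ) (a : A) (v : List A) :
    M.evalFrom p (a :: v) = M.evalFrom (M.step p a) v := rfl

lemma sufMap_sound : ∀ (γ : List (Symbol A g.NT)), ∀ w ∈ semL M g (sufMap γ),
    g.Derives γ (w.map Symbol.terminal) := by
  intro γ
  induction γ with
  | nil =>
      intro w hw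
      rw [(Language.mem_one _).1 hw]
      rfl
  | cons x γ ih =>
      cases x with
      | terminal a =>
          rintro w hw
          rw [sufMap_cons, semL_cons] at hw
          obtain ⟨u, hu, w', hw', rfl⟩ := hw
          rw [Set.mem_singleton_iff.1 hu]
          simpa using (ih w' hw').append_left [Symbol.terminal a]
      | nonterminal X =>
          rintro w hw
          rw [sufMap_cons, semL_cons] at hw
          obtain ⟨u, hu, w', hw', rfl⟩ := hw
          rw [List.map_append]
          exact ((hu.append_right γ).trans ((ih w' hw').append_left _) :)

lemma annF_sound {q : σ} : ∀ (γ : List (Symbol A g.NT)) (p : σ)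
    (β : List (Symbol A (NT g.NT σ))), β ∈ annF M p γ q → ∀ w ∈ semL M g β,
    w = [] ∧ ∃ v, g.Derives γ (v.map Symbol.terminal) ∧ M.evalFrom p v = q := by
  intro γ
  induction γ with
  | nil =>
      intro p β hβ w hw
      obtain ⟨rfl, rfl⟩ := mem_annF_nil.1 hβ
      refine ⟨(Language.mem_one _).1 hw, [], by rfl, rfl⟩
  | cons x γ ih =>
      cases x with
      | terminal a =>
          intro p β hβ w hw
          obtain ⟨rfl, v, hv, hq⟩ := ih (M.step p a) β (mem_annF_term.1 hβ) w hw
          exact ⟨rfl, a :: v, by simpa using hv.append_left [Symbol.terminal a], by simpa⟩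
      | nonterminal X =>
          intro p β hβ w hw
          obtain ⟨s, β', hβ', rfl⟩ := mem_annF_nt.1 hβ
          rw [semL_cons] at hw
          obtain ⟨u, ⟨rfl, v₁, hv₁, hs⟩, w', hw', rfl⟩ := hw
          obtain ⟨rfl, v₂, hv₂, hq⟩ := ih s β' hβ' w' hw'
          refine ⟨rfl, v₁ ++ v₂, ?_, ?_⟩
          · rw [List.map_append]
            exact (hv₁.append_right γ).trans (hv₂.append_left _)
          · rw [DFA.evalFrom_of_append, hs, hq]

lemma midF_sound : ∀ (γ : List (Symbol A g.NT)) (p : σ)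
    (β : List (Symbol A (NT g.NT σ))), β ∈ midF M p γ → ∀ w ∈ semL M g β,
    ∃ l, g.Derives γ ((l ++ w).map Symbol.terminal) ∧ M.evalFrom p l ∈ M.accept := by
  intro γ
  induction γ with
  | nil =>
      intro p β hβ w hw
      obtain ⟨hp, rfl⟩ := mem_midF_nil.1 hβ
      rw [(Language.mem_one _).1 hw]
      exact ⟨[], by rfl, hp⟩
  | cons x γ ih =>
      cases x with
      | terminal a =>
          intro p β hβ w hw
          rcases mem_midF_term.1 hβ with ⟨hp, rfl⟩ | hβ'
          · exact ⟨[], sufMap_sound _ w hw, hp⟩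
          · obtain ⟨l, hl, hacc⟩ := ih (M.step p a) β hβ' w hw
            exact ⟨a :: l, by simpa using hl.append_left [Symbol.terminal a], by simpa⟩
      | nonterminal X =>
          intro p β hβ w hw
          rcases mem_midF_nt.1 hβ with ⟨hp, rfl⟩ | rfl | ⟨s, β', hβ', rfl⟩
          · exact ⟨[], sufMap_sound _ w hw, hp⟩
          · rw [semL_cons] at hw
            obtain ⟨u, ⟨l, hl, hacc⟩, w', hw', rfl⟩ := hw
            refine ⟨l, ?_, hacc⟩
            have h2 := sufMap_sound γ w' hw'
            have h3 : g.Derives ([Symbol.nonterminal X] ++ γ)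
                ((l ++ u).map Symbol.terminal ++ w'.map Symbol.terminal) :=
              (hl.append_right γ).trans (h2.append_left _)
            simpa [List.append_assoc] using h3
          · rw [semL_cons] at hw
            obtain ⟨u, ⟨rfl, v₁, hv₁, hs⟩, w', hw', rfl⟩ := hw
            obtain ⟨l', hl', hacc⟩ := ih s β' hβ' w' hw'
            refine ⟨v₁ ++ l', ?_, ?_⟩
            · have h3 : g.Derives ([Symbol.nonterminal X] ++ γ)
                  (v₁.map Symbol.terminal ++ (l' ++ w').map Symbol.terminal) :=
                (hv₁.append_right γ).trans (hl'.append_left _)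
              simpa [List.append_assoc] using h3
            · rw [DFA.evalFrom_of_append, hs]
              exact hacc


lemma rule_sound {r' : ContextFreeRule A (NT g.NT σ)} (h : r' ∈ (quotG M g).rules) :
    ∀ w ∈ semL M g r'.output, w ∈ semS M g (Symbol.nonterminal r'.input) := by
  obtain ⟨r, hr, hcase⟩ := mem_quotG_rules.1 h
  have hprod : g.Produces [Symbol.nonterminal r.input] r.output :=
    ⟨r, hr, ContextFreeRule.Rewrites.input_output⟩
  rcases hcase with rfl | ⟨p, q, β, hβ, rfl⟩ | ⟨p, β, hβ, rfl⟩
  · intro w hw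
    exact hprod.trans_derives (sufMap_sound _ w hw)
  · intro w hw
    obtain ⟨rfl, v, hv, hq⟩ := annF_sound _ p β hβ w hw
    exact ⟨rfl, v, hprod.trans_derives hv, hq⟩
  · intro w hw
    obtain ⟨l, hl, hacc⟩ := midF_sound _ p β hβ w hw
    exact ⟨l, hprod.trans_derives hl, hacc⟩

lemma produces_sound {α β : List (Symbol A (NT g.NT σ))} (h : (quotG M g).Produces α β) :
    ∀ w ∈ semL M g β, w ∈ semL M g α := by
  obtain ⟨r', hr', hrw⟩ := h
  obtain ⟨x, y, rfl, rfl⟩ :=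
    ContextFreeRule.Rewrites.exists_parts (N := NT g.NT σ) (u := α) (v := β) hrw
  rw [semL_append, semL_append, semL_append, semL_append, semL_singleton]
  intro w hw
  obtain ⟨u, hu, w', hw', rfl⟩ := hw
  obtain ⟨u₁, hu₁, u₂, hu₂, rfl⟩ := hu
  exact ⟨u₁ ++ u₂, ⟨u₁, hu₁, u₂, rule_sound hr' u₂ hu₂, rfl⟩, w', hw', rfl⟩

lemma derives_sound {α β : List (Symbol A (NT g.NT σ))} (h : (quotG M g).Derives α β) :
    ∀ w ∈ semL M g β, w ∈ semL M g α := by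
  induction h with
  | refl => exact fun w hw => hw
  | tail _ hp ih => exact fun w hw => ih w (produces_sound hp w hw)

theorem quotG_sound {w : List A} (h : w ∈ (quotG M g).language) :
    ∃ l, g.Derives [Symbol.nonterminal g.initial] ((l ++ w).map Symbol.terminal) ∧
      M.evalFrom M.start l ∈ M.accept := by
  have h1 : w ∈ semL M g [Symbol.nonterminal (NT.mid g.initial M.start)] :=
    derives_sound h w (self_mem_semL w)
  rw [semL_singleton] at h1
  exact h1


@[simp] lemma sufSym_terminal (a : A) :
    (sufSym (Symbol.terminal a) : Symbol A (NT N σ)) = Symbol.terminal a := rfl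

@[simp] lemma sufSym_nonterminal (X : N) :
    (sufSym (Symbol.nonterminal X) : Symbol A (NT N σ)) = Symbol.nonterminal (NT.suf X) := rfl

lemma sufMap_rewrites {r : ContextFreeRule A g.NT} {u v : List (Symbol A g.NT)}
    (h : r.Rewrites u v) :
    (ContextFreeRule.mk (NT.suf r.input) (sufMap r.output) :
      ContextFreeRule A (NT g.NT σ)).Rewrites (sufMap u) (sufMap v) := by
  obtain ⟨x, y, rfl, rfl⟩ := h.exists_parts
  simpa [sufMap] using
    ContextFreeRule.rewrites_of_exists_parts
      (ContextFreeRule.mk (NT.suf r.input) (sufMap r.output)) (sufMap x) (sufMap y)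

lemma sufMap_derives {α β : List (Symbol A g.NT)} (h : g.Derives α β) :
    (quotG M g).Derives (sufMap α) (sufMap β) := by
  induction h with
  | refl => rfl
  | tail _ hp ih =>
      obtain ⟨r, hr, hrw⟩ := hp
      exact ih.trans_produces ⟨_, suf_rule_mem hr, sufMap_rewrites hrw⟩

lemma pre_single_mem_annF {X : N} {p s : σ} :
    ([Symbol.nonterminal (NT.pre X p s)] : List (Symbol A (NT N σ))) ∈
      annF M p [Symbol.nonterminal X] s :=
  mem_annF_nt.2 ⟨s, [], mem_annF_nil.2 ⟨rfl, rfl⟩, rfl⟩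

lemma nil_mem_annF_terminal : ∀ (u : List A) (p : σ),
    ([] : List (Symbol A (NT N σ))) ∈ annF M p (u.map Symbol.terminal) (M.evalFrom p u)
  | [], p => mem_annF_nil.2 ⟨rfl, rfl⟩
  | a :: u, p => mem_annF_term.2 (nil_mem_annF_terminal u (M.step p a))

lemma map_mem_midF_terminal : ∀ (l : List A) (p : σ), M.evalFrom p l ∈ M.accept →
    ∀ r : List A, (r.map Symbol.terminal : List (Symbol A (NT N σ))) ∈
      midF M p ((l ++ r).map Symbol.terminal)
  | [], p, hp, r => by simpa using sufMap_mem_midF hp (r.map Symbol.terminal)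
  | a :: l, p, hp, r =>
      mem_midF_term.2 (Or.inr (map_mem_midF_terminal l (M.step p a) hp r))

lemma annF_append {q : σ} : ∀ (s : List (Symbol A N)) (p : σ) (t : List (Symbol A N))
    (β : List (Symbol A (NT N σ))),
    β ∈ annF M p (s ++ t) q ↔
      ∃ m β₁ β₂, β₁ ∈ annF M p s m ∧ β₂ ∈ annF M m t q ∧ β = β₁ ++ β₂ := by
  intro s
  induction s with
  | nil =>
      intro p t β
      constructor
      · intro h
        exact ⟨p, [], β, mem_annF_nil.2 ⟨rfl, rfl⟩, h, rfl⟩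
      · rintro ⟨m, β₁, β₂, h1, h2, rfl⟩
        obtain ⟨rfl, rfl⟩ := mem_annF_nil.1 h1
        simpa using h2
  | cons x s ih =>
      cases x with
      | terminal a =>
          intro p t β
          rw [List.cons_append, mem_annF_term, ih]
          simp [mem_annF_term]
      | nonterminal X =>
          intro p t β
          rw [List.cons_append, mem_annF_nt]
          constructor
          · rintro ⟨s₀, β', hβ', rfl⟩
            obtain ⟨m, β₁, β₂, h1, h2, rfl⟩ := (ih s₀ t β').1 hβ'
            exact ⟨m, Symbol.nonterminal (NT.pre X p s₀) :: β₁, β₂,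
              mem_annF_nt.2 ⟨s₀, β₁, h1, rfl⟩, h2, rfl⟩
          · rintro ⟨m, β₁, β₂, h1, h2, rfl⟩
            obtain ⟨s₀, β₁', hβ₁', rfl⟩ := mem_annF_nt.1 h1
            exact ⟨s₀, β₁' ++ β₂, (ih s₀ t _).2 ⟨m, β₁', β₂, hβ₁', h2, rfl⟩, rfl⟩


lemma midF_append : ∀ (s : List (Symbol A N)) (p : σ) (t : List (Symbol A N))
    (β : List (Symbol A (NT N σ))),
    β ∈ midF M p (s ++ t) ↔
      (∃ m β₁ β₂, β₁ ∈ annF M p s m ∧ β₂ ∈ midF M m t ∧ β = β₁ ++ β₂) ∨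
      (∃ β₁, β₁ ∈ midF M p s ∧ β = β₁ ++ sufMap t) := by
  intro s
  induction s with
  | nil =>
      intro p t β
      constructor
      · intro h
        exact Or.inl ⟨p, [], β, mem_annF_nil.2 ⟨rfl, rfl⟩, h, rfl⟩
      · rintro (⟨m, β₁, β₂, h1, h2, rfl⟩ | ⟨β₁, h1, rfl⟩)
        · obtain ⟨rfl, rfl⟩ := mem_annF_nil.1 h1
          simpa using h2
        · obtain ⟨hp, rfl⟩ := mem_midF_nil.1 h1
          simpa using sufMap_mem_midF hp t
  | cons x s ih =>
      cases x with
      | terminal a =>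
          intro p t β
          rw [List.cons_append, mem_midF_term]
          constructor
          · rintro (⟨hp, rfl⟩ | h)
            · exact Or.inr ⟨sufMap (Symbol.terminal a :: s),
                mem_midF_term.2 (Or.inl ⟨hp, rfl⟩), by simp⟩
            · rcases (ih (M.step p a) t β).1 h with ⟨m, β₁, β₂, h1, h2, rfl⟩ | ⟨β₁, h1, rfl⟩
              · exact Or.inl ⟨m, β₁, β₂, mem_annF_term.2 h1, h2, rfl⟩
              · exact Or.inr ⟨β₁, mem_midF_term.2 (Or.inr h1), rfl⟩
          · rintro (⟨m, β₁, β₂, h1, h2, rfl⟩ | ⟨β₁, h1, rfl⟩)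
            · exact Or.inr ((ih (M.step p a) t _).2
                (Or.inl ⟨m, β₁, β₂, mem_annF_term.1 h1, h2, rfl⟩))
            · rcases mem_midF_term.1 h1 with ⟨hp, rfl⟩ | h1'
              · exact Or.inl ⟨hp, by simp⟩
              · exact Or.inr ((ih (M.step p a) t _).2 (Or.inr ⟨β₁, h1', rfl⟩))
      | nonterminal X =>
          intro p t β
          rw [List.cons_append, mem_midF_nt]
          constructor
          · rintro (⟨hp, rfl⟩ | rfl | ⟨s₀, β', hβ', rfl⟩)
            · exact Or.inr ⟨sufMap (Symbol.nonterminal X :: s),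
                mem_midF_nt.2 (Or.inl ⟨hp, rfl⟩), by simp⟩
            · exact Or.inr ⟨Symbol.nonterminal (NT.mid X p) :: sufMap s,
                mem_midF_nt.2 (Or.inr (Or.inl rfl)), by simp⟩
            · rcases (ih s₀ t β').1 hβ' with ⟨m, β₁, β₂, h1, h2, rfl⟩ | ⟨β₁, h1, rfl⟩
              · exact Or.inl ⟨m, Symbol.nonterminal (NT.pre X p s₀) :: β₁, β₂,
                  mem_annF_nt.2 ⟨s₀, β₁, h1, rfl⟩, h2, rfl⟩
              · exact Or.inr ⟨Symbol.nonterminal (NT.pre X p s₀) :: β₁,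
                  mem_midF_nt.2 (Or.inr (Or.inr ⟨s₀, β₁, h1, rfl⟩)), rfl⟩
          · rintro (⟨m, β₁, β₂, h1, h2, rfl⟩ | ⟨β₁, h1, rfl⟩)
            · obtain ⟨s₀, β₁', hβ₁', rfl⟩ := mem_annF_nt.1 h1
              exact Or.inr (Or.inr ⟨s₀, β₁' ++ β₂,
                (ih s₀ t _).2 (Or.inl ⟨m, β₁', β₂, hβ₁', h2, rfl⟩), rfl⟩)
            · rcases mem_midF_nt.1 h1 with ⟨hp, rfl⟩ | rfl | ⟨s₀, β₁'', h1'', rfl⟩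
              · exact Or.inl ⟨hp, by simp⟩
              · exact Or.inr (Or.inl (by simp))
              · exact Or.inr (Or.inr ⟨s₀, β₁'' ++ sufMap t,
                  (ih s₀ t _).2 (Or.inr ⟨β₁'', h1'', rfl⟩), rfl⟩)


lemma annF_complete {u : List A} {α : List (Symbol A g.NT)}
    (h : g.Derives α (u.map Symbol.terminal)) (p : σ) :
    ∃ β ∈ annF M p α (M.evalFrom p u), (quotG M g).Derives β [] := by
  induction h using Relation.ReflTransGen.head_induction_on with
  | refl => exact ⟨[], nil_mem_annF_terminal u p, by rfl⟩
  | head hstep _ ih =>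
      obtain ⟨β', hβ', hder⟩ := ih
      obtain ⟨r, hr, hrw⟩ := hstep
      obtain ⟨x, y, rfl, rfl⟩ := hrw.exists_parts
      obtain ⟨m₁, β₁, βr, h1, h2, rfl⟩ := (annF_append x p _ β').1
        (by simpa [List.append_assoc] using hβ')
      obtain ⟨m₂, β₂, β₃, h3, h4, rfl⟩ := (annF_append r.output m₁ y βr).1 h2
      refine ⟨β₁ ++ [Symbol.nonterminal (NT.pre r.input m₁ m₂)] ++ β₃, ?_, ?_⟩
      · simp only [List.append_assoc]
        exact (annF_append x p _ _).2 ⟨m₁, β₁, _, h1,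
          (annF_append [Symbol.nonterminal r.input] m₁ y _).2
            ⟨m₂, _, β₃, pre_single_mem_annF, h4, rfl⟩, by simp⟩
      · refine Relation.ReflTransGen.head
          ⟨⟨NT.pre r.input m₁ m₂, β₂⟩, pre_rule_mem hr h3,
            ContextFreeRule.rewrites_of_exists_parts _ β₁ β₃⟩ ?_
        simpa [List.append_assoc] using hder

lemma midF_complete {l r : List A} {α : List (Symbol A g.NT)}
    (h : g.Derives α ((l ++ r).map Symbol.terminal)) (p : σ)
    (hacc : M.evalFrom p l ∈ M.accept) :
    ∃ β ∈ midF M p α, (quotG M g).Derives β (r.map Symbol.terminal) := by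
  induction h using Relation.ReflTransGen.head_induction_on with
  | refl => exact ⟨r.map Symbol.terminal, map_mem_midF_terminal l p hacc r, by rfl⟩
  | head hstep _ ih =>
      obtain ⟨β', hβ', hder⟩ := ih
      obtain ⟨rr, hr, hrw⟩ := hstep
      obtain ⟨x, y, rfl, rfl⟩ := hrw.exists_parts
      rcases (midF_append x p _ β').1 (by simpa [List.append_assoc] using hβ') with ⟨m, β₁, βr, h1, h2, rfl⟩ | ⟨β₁, h1, rfl⟩
      · rcases (midF_append rr.output m y βr).1 h2 with
          ⟨m', β₂, β₃, h3, h4, rfl⟩ | ⟨β₂, h3, rfl⟩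
        · refine ⟨β₁ ++ [Symbol.nonterminal (NT.pre rr.input m m')] ++ β₃, ?_, ?_⟩
          · simp only [List.append_assoc]
            exact (midF_append x p _ _).2 (Or.inl ⟨m, β₁, _, h1,
              (midF_append [Symbol.nonterminal rr.input] m y _).2
                (Or.inl ⟨m', _, β₃, pre_single_mem_annF, h4, rfl⟩), by simp⟩)
          · refine Relation.ReflTransGen.head
              ⟨⟨NT.pre rr.input m m', β₂⟩, pre_rule_mem hr h3,
                ContextFreeRule.rewrites_of_exists_parts _ β₁ β₃⟩ ?_
            rw [List.append_assoc]
            exact hder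
        · refine ⟨β₁ ++ [Symbol.nonterminal (NT.mid rr.input m)] ++ sufMap y, ?_, ?_⟩
          · simp only [List.append_assoc]
            refine (midF_append x p _ _).2 (Or.inl ⟨m, β₁,
              Symbol.nonterminal (NT.mid rr.input m) :: sufMap y, h1,
              mem_midF_nt.2 (Or.inr (Or.inl rfl)), by simp⟩)
          · refine Relation.ReflTransGen.head
              ⟨⟨NT.mid rr.input m, β₂⟩, mid_rule_mem hr h3,
                ContextFreeRule.rewrites_of_exists_parts _ β₁ (sufMap y)⟩ ?_
            rw [List.append_assoc]
            exact hder
      · refine ⟨β₁ ++ sufMap ([Symbol.nonterminal rr.input] ++ y), ?_, ?_⟩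
        · simp only [List.append_assoc]
          exact (midF_append x p _ _).2 (Or.inr ⟨β₁, h1, by simp⟩)
        · have hrw2 : (ContextFreeRule.mk (NT.suf rr.input) (sufMap rr.output) :
              ContextFreeRule A (NT g.NT σ)).Rewrites
              (β₁ ++ [Symbol.nonterminal (NT.suf rr.input)] ++ sufMap y)
              (β₁ ++ sufMap rr.output ++ sufMap y) :=
            ContextFreeRule.rewrites_of_exists_parts _ β₁ (sufMap y)
          refine Relation.ReflTransGen.head ⟨_, suf_rule_mem hr, ?_⟩ hder
          simp only [List.append_assoc, sufMap_append, sufMap_cons, sufMap_nil, sufSym_nonterminal,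
            List.singleton_append, List.cons_append, List.nil_append] at hrw2 ⊢
          exact hrw2

theorem quotG_complete {l r : List A} (hl : M.evalFrom M.start l ∈ M.accept)
    (h : g.Derives [Symbol.nonterminal g.initial] ((l ++ r).map Symbol.terminal)) :
    r ∈ (quotG M g).language := by
  rcases h.eq_or_head with heq | ⟨γ, hstep, hder⟩
  · exfalso
    cases hll : l ++ r with
    | nil => rw [hll] at heq; simp at heq
    | cons a w => rw [hll] at heq; simp at heq
  · obtain ⟨rr, hrr, hrw⟩ := hstep
    obtain ⟨x, y, hx, rfl⟩ := hrw.exists_parts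
    have hxy : x = [] ∧ rr.input = g.initial ∧ y = [] := by
      cases x with
      | nil => simpa [eq_comm] using hx
      | cons z x => simp [List.cons_eq_cons] at hx
    obtain ⟨rfl, hinit, rfl⟩ := hxy
    simp only [List.nil_append, List.append_nil] at hder ⊢
    obtain ⟨β, hβ, hder'⟩ := midF_complete hder M.start hl
    rw [ContextFreeGrammar.mem_language_iff]
    refine Relation.ReflTransGen.head
      ⟨⟨NT.mid rr.input M.start, β⟩, mid_rule_mem hrr hβ, ?_⟩ hder'
    rw [quotG_initial, ← hinit]
    simpa using ContextFreeRule.Rewrites.input_output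

end CFQuot

/-- If `L` is a context-free language and `R` is a regular language over a finite
alphabet `A`, then the left quotient `R \ L = { r | ∃ l ∈ R, l ++ r ∈ L }`
is context-free. -/
theorem leftQuotient_of_contextFree_regular_isContextFree
    {A : Type} [Fintype A] (L R : Language A)
    (hL : L.IsContextFree) (hR : R.IsRegular) :
    Language.IsContextFree {r : List A | ∃ l ∈ R, l ++ r ∈ L} := by
  obtain ⟨g, rfl⟩ := hL
  obtain ⟨σ, iσ, M, rfl⟩ := hR
  letI := iσ
  refine ⟨CFQuot.quotG M g, ?_⟩
  ext r
  constructor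
  · intro h
    obtain ⟨l, hder, hacc⟩ := CFQuot.quotG_sound h
    exact ⟨l, (DFA.mem_accepts M).2 hacc, hder⟩
  · rintro ⟨l, hlR, hlr⟩
    exact CFQuot.quotG_complete ((DFA.mem_accepts M).1 hlR)
      ((ContextFreeGrammar.mem_language_iff g _).1 hlr)
end

section
/- Given a CFG G in which every non-empty production is inhabited (its right-hand side derives at least one terminal string), and a string α of length i, run the Earley recognition algorithm on α producing charts c₀,…,cᵢ. Then there exists a string γ with α ++ γ ∈ L(G) if and only if chart cᵢ is non-empty. -/
/-- An Earley item `[E → α • β (i)]`: nonterminal `lhs`, matched part `before`,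
remaining part `after`, and span start index `start`. -/
structure EarleyItem (T N : Type) where
  lhs : N
  before : List (Symbol T N)
  after : List (Symbol T N)
  start : ℕ

/-- `EarleyInChart g w j it` means that running the Earley recognition algorithm
for grammar `g` on input `w` places item `it` in the chart at index `j`.
The four constructors are initialization and the predictor, scanner and
completer operations. -/
inductive EarleyInChart {T : Type} (g : ContextFreeGrammar T) (w : List T) :
    ℕ → EarleyItem T g.NT → Prop
  | init (r : ContextFreeRule T g.NT) (hr : r ∈ g.rules) (hinit : r.input = g.initial) :
      EarleyInChart g w 0 ⟨g.initial, [], r.output, 0⟩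
  | predict (j s : ℕ) (E A : g.NT) (a b : List (Symbol T g.NT))
      (h : EarleyInChart g w j ⟨E, a, Symbol.nonterminal A :: b, s⟩)
      (r : ContextFreeRule T g.NT) (hr : r ∈ g.rules) (hA : r.input = A) :
      EarleyInChart g w j ⟨A, [], r.output, j⟩
  | scan (j s : ℕ) (E : g.NT) (t : T) (a b : List (Symbol T g.NT))
      (h : EarleyInChart g w j ⟨E, a, Symbol.terminal t :: b, s⟩)
      (ht : w[j]? = some t) :
      EarleyInChart g w (j + 1) ⟨E, a ++ [Symbol.terminal t], b, s⟩
  | complete (j s k : ℕ) (A E : g.NT) (a ν π : List (Symbol T g.NT))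
      (hc : EarleyInChart g w j ⟨A, a, [], s⟩)
      (hp : EarleyInChart g w s ⟨E, ν, Symbol.nonterminal A :: π, k⟩) :
      EarleyInChart g w j ⟨E, ν ++ [Symbol.nonterminal A], π, k⟩

open ContextFreeGrammar

section EarleyHelpers

variable {T : Type}



/-- n-step derivation counter. -/
inductive DerivN (g : ContextFreeGrammar T) : ℕ → List (Symbol T g.NT) → List (Symbol T g.NT) → Prop
  | refl (w) : DerivN g 0 w w
  | head {n u v w} : g.Produces u v → DerivN g n v w → DerivN g (n+1) u w

lemma DerivN.derives {g : ContextFreeGrammar T} {n u v} (h : DerivN g n u v) : g.Derives u v := by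
  induction h with
  | refl w => exact Derives.refl w
  | head hp _ ih => exact hp.trans_derives ih

lemma derivN_of_derives {g : ContextFreeGrammar T} {u v} (h : g.Derives u v) :
    ∃ n, DerivN g n u v := by
  induction h using Relation.ReflTransGen.head_induction_on with
  | refl => exact ⟨0, DerivN.refl v⟩
  | head hp _ ih => exact ⟨ih.choose + 1, DerivN.head hp ih.choose_spec⟩

lemma rewrites_nil {N : Type*} {r : ContextFreeRule T N} {v} : ¬ r.Rewrites [] v := by
  intro h
  rcases h.exists_parts with ⟨p, q, hpq, -⟩
  simp at hpq

lemma rewrites_split {N : Type*} {r : ContextFreeRule T N} {x y v} (h : r.Rewrites (x ++ y) v) :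
    (∃ x', r.Rewrites x x' ∧ v = x' ++ y) ∨ (∃ y', r.Rewrites y y' ∧ v = x ++ y') := by
  induction x generalizing v with
  | nil => exact .inr ⟨v, h, rfl⟩
  | cons c x' ih =>
    cases h with
    | head s => exact .inl ⟨r.output ++ x', ContextFreeRule.Rewrites.head x', by simp⟩
    | cons _ h' =>
      rcases ih h' with ⟨x2, hx2, rfl⟩ | ⟨y2, hy2, rfl⟩
      · exact .inl ⟨c :: x2, hx2.cons c, by simp⟩
      · exact .inr ⟨y2, hy2, by simp⟩


lemma derivN_append_split' {g : ContextFreeGrammar T} {n u w} (h : DerivN g n u w) :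
    ∀ x y, u = x ++ y →
    ∃ n1 n2 x' y', n1 + n2 = n ∧ w = x' ++ y' ∧ DerivN g n1 x x' ∧ DerivN g n2 y y' := by
  induction h with
  | refl w => exact fun x y hxy => ⟨0, 0, x, y, rfl, hxy, DerivN.refl x, DerivN.refl y⟩
  | @head n u v w hp hd ih =>
    rintro x y rfl
    rcases hp with ⟨r, hr, hrw⟩
    rcases rewrites_split hrw with ⟨x2, hx2, rfl⟩ | ⟨y2, hy2, rfl⟩
    · rcases ih x2 y rfl with ⟨n1, n2, x', y', hn, rfl, h1, h2⟩
      exact ⟨n1 + 1, n2, x', y', by omega, rfl, DerivN.head ⟨r, hr, hx2⟩ h1, h2⟩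
    · rcases ih x y2 rfl with ⟨n1, n2, x', y', hn, rfl, h1, h2⟩
      exact ⟨n1, n2 + 1, x', y', by omega, rfl, h1, DerivN.head ⟨r, hr, hy2⟩ h2⟩

lemma derivN_append_split {g : ContextFreeGrammar T} {n x y w} (h : DerivN g n (x ++ y) w) :
    ∃ n1 n2 x' y', n1 + n2 = n ∧ w = x' ++ y' ∧ DerivN g n1 x x' ∧ DerivN g n2 y y' :=
  derivN_append_split' h x y rfl

lemma derivN_nil {g : ContextFreeGrammar T} {n w} (h : DerivN g n [] w) : w = [] := by
  cases h with
  | refl => rfl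
  | head hp _ =>
    rcases hp with ⟨r, hr, hrw⟩
    exact absurd hrw rewrites_nil

lemma derivN_terminal {g : ContextFreeGrammar T} {n t w} (h : DerivN g n [Symbol.terminal t] w) :
    n = 0 ∧ w = [Symbol.terminal t] := by
  cases h with
  | refl => exact ⟨rfl, rfl⟩
  | head hp _ =>
    exfalso
    rcases hp with ⟨r, hr, hrw⟩
    rcases hrw.exists_parts with ⟨p, q, hpq, -⟩
    cases p with
    | nil => simp at hpq
    | cons c p' => cases p' <;> simp_all

lemma produces_single_nt {g : ContextFreeGrammar T} {A v}
    (h : g.Produces [Symbol.nonterminal A] v) :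
    ∃ r ∈ g.rules, r.input = A ∧ v = r.output := by
  rcases h with ⟨r, hr, hrw⟩
  rcases hrw.exists_parts with ⟨p, q, hpq, rfl⟩
  cases p with
  | cons c p' => cases p' <;> simp_all
  | nil =>
    cases q with
    | cons c q' => simp_all
    | nil =>
      simp only [List.nil_append, List.append_nil, List.cons.injEq,
        Symbol.nonterminal.injEq] at hpq ⊢
      exact ⟨r, hr, hpq.1.symm, rfl⟩

lemma derives_append_split {g : ContextFreeGrammar T} {x y} {u : List T}
    (h : g.Derives (x ++ y) (u.map Symbol.terminal)) :
    ∃ u1 u2 : List T, u = u1 ++ u2 ∧ g.Derives x (u1.map Symbol.terminal) ∧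
      g.Derives y (u2.map Symbol.terminal) := by
  rcases derivN_of_derives h with ⟨n, hn⟩
  rcases derivN_append_split hn with ⟨n1, n2, x', y', -, hw, h1, h2⟩
  rcases List.map_eq_append_iff.mp hw with ⟨u1, u2, rfl, rfl, rfl⟩
  exact ⟨u1, u2, rfl, h1.derives, h2.derives⟩

lemma derivN_nt {g : ContextFreeGrammar T} {m A w} (h : DerivN g m [Symbol.nonterminal A] w) :
    w = [Symbol.nonterminal A] ∨
      ∃ m' r, r ∈ g.rules ∧ r.input = A ∧ m = m' + 1 ∧ DerivN g m' r.output w := by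
  cases h with
  | refl => exact .inl rfl
  | head hp h' =>
    rcases produces_single_nt hp with ⟨r, hr, hA, rfl⟩
    exact .inr ⟨_, r, hr, hA, rfl, h'⟩

lemma chart_bound {g : ContextFreeGrammar T} {w : List T} {j it}
    (h : EarleyInChart g w j it) : it.start ≤ j ∧ j ≤ w.length := by
  induction h with
  | init r hr hinit => exact ⟨le_refl 0, Nat.zero_le _⟩
  | predict j s E A a b h r hr hA ih => exact ⟨le_refl j, ih.2⟩
  | scan j s E t a b h ht ih =>
    have hj : j < w.length := by
      rcases Nat.lt_or_ge j w.length with h' | h'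
      · exact h'
      · rw [List.getElem?_eq_none h'] at ht; cases ht
    exact ⟨le_trans ih.1 (Nat.le_succ j), hj⟩
  | complete j s k A E a ν π hc hp ihc ihp => exact ⟨le_trans ihp.1 ihc.1, ihc.2⟩

lemma earley_complete {g : ContextFreeGrammar T} {α : List T} :
    ∀ n : ℕ, ∀ β : List (Symbol T g.NT), ∀ (u : List T) (j : ℕ) (E : g.NT)
      (a : List (Symbol T g.NT)) (s : ℕ),
      EarleyInChart g α j ⟨E, a, β, s⟩ → DerivN g n β (List.map Symbol.terminal u) →
      (α.drop j <+: u ∨ u <+: α.drop j) →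
      (u <+: α.drop j ∧ EarleyInChart g α (j + u.length) ⟨E, a ++ β, [], s⟩) ∨
        ∃ it, EarleyInChart g α α.length it := by
  intro n
  induction n using Nat.strong_induction_on with
  | _ n ihn =>
  intro β
  induction β with
  | nil =>
    intro u j E a s hit hder hcomp
    have hu : u = [] := by simpa using (derivN_nil hder).symm
    subst hu
    exact .inl ⟨List.nil_prefix, by simpa using hit⟩
  | cons hd β' ihβ =>
    intro u j E a s hit hder hcomp
    cases hd with
    | terminal t =>
      rcases derivN_append_split (x := [Symbol.terminal t]) (y := β') (by simpa using hder) with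
        ⟨n1, n2, x', y', hn, hw, h1, h2⟩
      obtain ⟨hn1, rfl⟩ := derivN_terminal h1
      cases u with
      | nil => simp at hw
      | cons t0 u' =>
        rw [List.map_cons, List.singleton_append] at hw
        obtain ⟨ht0, hy'⟩ := List.cons.inj hw
        obtain rfl : t0 = t := by simpa using ht0
        rw [← hy'] at h2
        rcases Nat.lt_or_ge j α.length with hj | hj
        · have hdj : α.drop j = α[j] :: α.drop (j + 1) := (List.getElem_cons_drop hj).symm
          have hAj : α[j] = t0 := by
            rcases hcomp with hc | hc
            · rw [hdj] at hc; exact (List.cons_prefix_cons.mp hc).1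
            · rw [hdj] at hc; exact ((List.cons_prefix_cons.mp hc).1).symm
          have hscan : EarleyInChart g α (j + 1) ⟨E, a ++ [Symbol.terminal t0], β', s⟩ :=
            EarleyInChart.scan j s E t0 a β' hit (by rw [List.getElem?_eq_getElem hj, hAj])
          have hcomp' : α.drop (j + 1) <+: u' ∨ u' <+: α.drop (j + 1) := by
            rcases hcomp with hc | hc
            · left; rw [hdj, hAj] at hc; exact (List.cons_prefix_cons.mp hc).2
            · right; rw [hdj, hAj] at hc; exact (List.cons_prefix_cons.mp hc).2
          have hn2 : n2 = n := by omega
          rcases ihβ u' (j + 1) E (a ++ [Symbol.terminal t0]) s hscan (hn2 ▸ h2) hcomp' with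
            ⟨hpre, hit'⟩ | hdone
          · left
            refine ⟨by rw [hdj, hAj]; exact List.cons_prefix_cons.mpr ⟨rfl, hpre⟩, ?_⟩
            have hidx : j + 1 + u'.length = j + (t0 :: u').length := by
              simp [List.length_cons]; omega
            rw [← hidx]
            have : (a ++ [Symbol.terminal t0]) ++ β' = a ++ (Symbol.terminal t0 :: β') := by
              simp
            rw [← this]
            exact hit'
          · exact .inr hdone
        · have hj' : j = α.length := le_antisymm (chart_bound hit).2 hj
          exact .inr ⟨_, hj' ▸ hit⟩
    | nonterminal A =>
      rcases derivN_append_split (x := [Symbol.nonterminal A]) (y := β') (by simpa using hder)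
        with ⟨n1, n2, x', y', hn, hw, h1, h2⟩
      rcases List.map_eq_append_iff.mp hw with ⟨u1, u2, rfl, hx', hy'⟩
      rw [← hy'] at h2
      rw [← hx'] at h1
      rcases derivN_nt h1 with heq | ⟨n1', r, hr, hA, rfl, h1'⟩
      · exact absurd heq (by cases u1 <;> simp)
      · have hpred : EarleyInChart g α j ⟨A, [], r.output, j⟩ :=
          EarleyInChart.predict j s E A a β' hit r hr hA
        have hcomp1 : α.drop j <+: u1 ∨ u1 <+: α.drop j := by
          rcases hcomp with hc | hc
          · exact List.prefix_or_prefix_of_prefix hc (List.prefix_append u1 u2)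
          · exact .inr ((List.prefix_append u1 u2).trans hc)
        rcases ihn n1' (by omega) r.output u1 j A [] j hpred h1' hcomp1 with
          ⟨hu1, hcl⟩ | hdone
        · have hcompl : EarleyInChart g α (j + u1.length)
              ⟨E, a ++ [Symbol.nonterminal A], β', s⟩ :=
            EarleyInChart.complete (j + u1.length) j s A E ([] ++ r.output) a β' hcl hit
          obtain ⟨rest, hrest⟩ := hu1
          have hrest' : α.drop (j + u1.length) = rest := by
            rw [← List.drop_drop, ← hrest, List.drop_left]
          have hcomp2 : α.drop (j + u1.length) <+: u2 ∨ u2 <+: α.drop (j + u1.length) := by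
            rw [hrest']
            rcases hcomp with hc | hc
            · left; rw [← hrest] at hc; exact (List.prefix_append_right_inj u1).mp hc
            · right; rw [← hrest] at hc; exact (List.prefix_append_right_inj u1).mp hc
          rcases ihn n2 (by omega) β' u2 (j + u1.length) E (a ++ [Symbol.nonterminal A]) s
            hcompl h2 hcomp2 with ⟨hu2, hit2⟩ | hdone
          · left
            constructor
            · rw [← hrest]
              exact (List.prefix_append_right_inj u1).mpr (hrest' ▸ hu2)
            · have hidx : j + u1.length + u2.length = j + (u1 ++ u2).length := by
                simp [List.length_append]; omega
              rw [← hidx]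
              have heq : (a ++ [Symbol.nonterminal A]) ++ β'
                  = a ++ (Symbol.nonterminal A :: β') := by simp
              rw [← heq]
              exact hit2
          · exact .inr hdone
        · exact .inr hdone

lemma take_drop_take {w : List T} {s j : ℕ} (hsj : s ≤ j) :
    w.take s ++ (w.take j).drop s = w.take j := by
  conv_rhs => rw [← List.take_append_drop s (w.take j)]
  rw [List.take_take, min_eq_left hsj]

lemma drop_take_append {w : List T} {k s j : ℕ} (hks : k ≤ s) (hsj : s ≤ j)
    (hsw : s ≤ w.length) :
    (w.take s).drop k ++ (w.take j).drop s = (w.take j).drop k := by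
  conv_rhs => rw [← take_drop_take hsj]
  rw [List.drop_append_of_le_length]
  rw [List.length_take]
  exact le_min hks (hks.trans hsw)

lemma earley_sound {g : ContextFreeGrammar T} {w : List T}
    (hinh : ∀ r ∈ g.rules, r.output ≠ [] →
      ∃ γ : List T, g.Derives r.output (γ.map Symbol.terminal)) :
    ∀ j it, EarleyInChart g w j it →
      (∃ r ∈ g.rules, r.input = it.lhs ∧ r.output = it.before ++ it.after) ∧
      g.Derives it.before (((w.take j).drop it.start).map Symbol.terminal) ∧
      ∃ δ, g.Derives [Symbol.nonterminal g.initial]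
          ((w.take it.start).map Symbol.terminal ++ Symbol.nonterminal it.lhs :: δ) ∧
        ∃ η : List T, g.Derives δ (η.map Symbol.terminal) := by
  intro j it h
  induction h with
  | init r hr hinit =>
    refine ⟨⟨r, hr, by simp [hinit], by simp⟩, by simp [Derives.refl], [], ?_, [], by
      simpa using Derives.refl (g := g) []⟩
    simpa using Derives.refl (g := g) [Symbol.nonterminal g.initial]
  | predict j s E A a b h r hr hA ih =>
    obtain ⟨⟨r', hr', hin', hout'⟩, hda, δ, hctx, η, hδ⟩ := ih
    simp only at hda hctx hout' hin'
    have hsj : s ≤ j := (chart_bound h).1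
    refine ⟨⟨r, hr, by simpa using hA, by simp⟩, by simp [List.drop_take, Derives.refl], ?_⟩
    -- context for A
    refine ⟨b ++ δ, ?_, ?_⟩
    · -- [nt init] ⇒* mt (take j) ++ nt A :: (b ++ δ)
      have step1 : g.Produces ((w.take s).map Symbol.terminal ++ Symbol.nonterminal E :: δ)
          ((w.take s).map Symbol.terminal ++ r'.output ++ δ) := by
        refine ⟨r', hr', ?_⟩
        have := ContextFreeRule.rewrites_of_exists_parts r' ((w.take s).map Symbol.terminal) δ
        rw [hin'] at this
        simpa using this
      have step2 : g.Derives ((w.take s).map Symbol.terminal ++ r'.output ++ δ)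
          ((w.take j).map Symbol.terminal ++ Symbol.nonterminal A :: (b ++ δ)) := by
        rw [hout']
        have hmid : g.Derives (a ++ (Symbol.nonterminal A :: (b ++ δ)))
            (((w.take j).drop s).map Symbol.terminal ++ (Symbol.nonterminal A :: (b ++ δ))) :=
          hda.append_right _
        have := (hmid.append_left ((w.take s).map Symbol.terminal))
        refine Derives.trans (by simpa [List.append_assoc] using this) ?_
        rw [← take_drop_take hsj (w := w), List.map_append]
        simp [List.append_assoc, Derives.refl]
      exact (hctx.trans_produces step1).trans step2
    · -- b ++ δ derives terminals
      have houtne : r'.output ≠ [] := by rw [hout']; simp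
      obtain ⟨γ0, hγ0⟩ := hinh r' hr' houtne
      rw [hout'] at hγ0
      obtain ⟨u1, u2, -, -, hnb⟩ := derives_append_split hγ0
      obtain ⟨v1, v2, -, -, hb⟩ := derives_append_split
        (by simpa using hnb : g.Derives ([Symbol.nonterminal A] ++ b) (u2.map Symbol.terminal))
      exact ⟨v2 ++ η, by
        rw [List.map_append]
        exact (hb.append_right δ).trans (hδ.append_left _)⟩
  | scan j s E t a b h ht ih =>
    obtain ⟨⟨r', hr', hin', hout'⟩, hda, δ, hctx, η, hδ⟩ := ih
    simp only at hda hctx hout' hin'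
    have hsj : s ≤ j := (chart_bound h).1
    have hjw : j < w.length := by
      rcases Nat.lt_or_ge j w.length with h' | h'
      · exact h'
      · rw [List.getElem?_eq_none h'] at ht; cases ht
    have hslice : (w.take (j + 1)).drop s = (w.take j).drop s ++ [t] := by
      rw [List.take_succ, ht, Option.toList_some, List.drop_append_of_le_length]
      rw [List.length_take]
      exact le_min hsj (hsj.trans hjw.le)
    refine ⟨⟨r', hr', hin', by rw [hout']; simp⟩, ?_, ⟨δ, hctx, η, hδ⟩⟩
    simp only
    rw [hslice, List.map_append]
    exact hda.append_right _
  | complete j s k A E a ν π hc hp ihc ihp =>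
    obtain ⟨⟨rA, hrA, hinA, houtA⟩, hdA, -⟩ := ihc
    obtain ⟨⟨r', hr', hin', hout'⟩, hdν, δ, hctx, η, hδ⟩ := ihp
    simp only at hdA hdν hctx hout' hin' hinA houtA
    have hks : k ≤ s := (chart_bound hp).1
    have hsj : s ≤ j := (chart_bound hc).1
    rw [List.append_nil] at houtA
    refine ⟨⟨r', hr', hin', by rw [hout']; simp⟩, ?_, ⟨δ, hctx, η, hδ⟩⟩
    simp only
    have h1 : g.Derives (ν ++ [Symbol.nonterminal A])
        (((w.take s).drop k).map Symbol.terminal ++ [Symbol.nonterminal A]) :=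
      hdν.append_right _
    have h2 : g.Produces (((w.take s).drop k).map Symbol.terminal ++ [Symbol.nonterminal A])
        (((w.take s).drop k).map Symbol.terminal ++ rA.output) := by
      refine ⟨rA, hrA, ?_⟩
      have := ContextFreeRule.rewrites_of_exists_parts rA
        (((w.take s).drop k).map Symbol.terminal) []
      rw [hinA] at this
      simpa using this
    have h3 : g.Derives (((w.take s).drop k).map Symbol.terminal ++ rA.output)
        (((w.take j).drop k).map Symbol.terminal) := by
      rw [houtA, ← drop_take_append hks hsj (hsj.trans (chart_bound hc).2) (w := w), List.map_append]
      exact hdA.append_left _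
    exact (h1.trans_produces h2).trans h3

end EarleyHelpers

/-- Given a CFG `g` in which every non-empty production is inhabited (its
right-hand side derives some terminal string), and a string `α` of length `i`,
there exists a string `γ` with `α ++ γ ∈ L(g)` iff the Earley chart at index
`i` is non-empty. -/
theorem earley_chart_nonempty_iff_extendable {T : Type} (g : ContextFreeGrammar T)
    (hinh : ∀ r ∈ g.rules, r.output ≠ [] →
      ∃ γ : List T, g.Derives r.output (γ.map Symbol.terminal))
    (α : List T) :
    (∃ γ : List T, α ++ γ ∈ g.language) ↔
      ∃ it : EarleyItem T g.NT, EarleyInChart g α α.length it := by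
  constructor
  · rintro ⟨γ, hγ⟩
    rw [ContextFreeGrammar.mem_language_iff] at hγ
    rcases hγ.eq_or_head with heq | ⟨v, hp, hd⟩
    · exfalso
      cases hl : α ++ γ with
      | nil => rw [hl] at heq; simp at heq
      | cons t l => rw [hl] at heq; simp at heq
    · rcases produces_single_nt hp with ⟨r, hr, hinit, rfl⟩
      obtain ⟨n, hn⟩ := derivN_of_derives hd
      have hbase := EarleyInChart.init (g := g) (w := α) r hr hinit
      rcases earley_complete n r.output (α ++ γ) 0 g.initial [] 0 hbase hn
        (Or.inl (by simpa using List.prefix_append α γ)) with ⟨hpre, hitem⟩ | hdone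
      · have hγnil : γ = [] := by
          have hlen := hpre.length_le
          simp only [List.drop_zero, List.length_append] at hlen
          exact List.length_eq_zero_iff.mp (by omega)
        subst hγnil
        exact ⟨_, by simpa using hitem⟩
      · exact hdone
  · rintro ⟨⟨E, a, b, s⟩, hit⟩
    obtain ⟨⟨r, hr, hrin, hrout⟩, hda, δ, hctx, η, hδ⟩ := earley_sound hinh _ _ hit
    simp only at hrin hrout hda hctx
    rw [List.take_length] at hda
    obtain ⟨ηb, hbη⟩ : ∃ ηb : List T, g.Derives b (ηb.map Symbol.terminal) := by
      by_cases hout : r.output = []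
      · have hb : b = [] := (List.append_eq_nil_iff.mp (hrout ▸ hout)).2
        exact ⟨[], by rw [hb]; exact Derives.refl _⟩
      · obtain ⟨γ0, h0⟩ := hinh r hr hout
        rw [hrout] at h0
        obtain ⟨u1, u2, -, -, hb⟩ := derives_append_split h0
        exact ⟨u2, hb⟩
    refine ⟨ηb ++ η, ?_⟩
    rw [ContextFreeGrammar.mem_language_iff]
    have step1 : g.Produces ((α.take s).map Symbol.terminal ++ Symbol.nonterminal E :: δ)
        ((α.take s).map Symbol.terminal ++ r.output ++ δ) := by
      refine ⟨r, hr, ?_⟩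
      have := ContextFreeRule.rewrites_of_exists_parts r ((α.take s).map Symbol.terminal) δ
      rw [hrin] at this
      simpa using this
    have hmid : g.Derives (a ++ (b ++ δ))
        ((α.drop s).map Symbol.terminal ++
          (ηb.map Symbol.terminal ++ η.map Symbol.terminal)) :=
      (hda.append_right _).trans
        (((hbη.append_right δ).trans (hδ.append_left _)).append_left _)
    have hfin : ((α.take s).map (Symbol.terminal : T → Symbol T g.NT)) ++
        ((α.drop s).map Symbol.terminal ++ (ηb.map Symbol.terminal ++ η.map Symbol.terminal))
        = (α ++ (ηb ++ η)).map Symbol.terminal := by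
      rw [← List.append_assoc, ← List.map_append, List.take_append_drop,
        List.map_append, List.map_append]
    have step2 : g.Derives ((α.take s).map Symbol.terminal ++ r.output ++ δ)
        ((α ++ (ηb ++ η)).map Symbol.terminal) := by
      rw [hrout, ← hfin]
      simpa [List.append_assoc] using hmid.append_left ((α.take s).map Symbol.terminal)
    exact (hctx.trans_produces step1).trans step2
end

section
/- If chart i of an Earley parse of string α (with respect to CFG G) is empty, then chart j is empty for every j > i, and consequently no extension α ++ γ is accepted by the Earley recognizer. -/
lemma earley_start_le {T : Type} (g : ContextFreeGrammar T) (w : List T) :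
    ∀ {j : ℕ} {it : EarleyItem T g.NT}, EarleyInChart g w j it → it.start ≤ j := by
  intro j it h
  induction h with
  | init r hr hinit => exact Nat.le_refl 0
  | predict j s E A a b h r hr hA ih => exact Nat.le_refl j
  | scan j s E t a b h ht ih => exact ih.trans (Nat.le_succ j)
  | complete j s k A E a ν π hc hp ihc ihp => exact ihp.trans ihc

lemma earley_prop {T : Type} (g : ContextFreeGrammar T) (w : List T) (i : ℕ)
    (he : ∀ it : EarleyItem T g.NT, ¬ EarleyInChart g w i it) :
    ∀ j (it : EarleyItem T g.NT), EarleyInChart g w j it → i ≤ j → False := by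
  intro j it h
  induction h with
  | init r hr hinit =>
      intro hij
      have : i = 0 := Nat.le_zero.mp hij
      subst this
      exact he _ (.init r hr hinit)
  | predict j s E A a b h r hr hA ih =>
      intro hij
      rcases Nat.lt_or_ge i j with hlt | hge
      · exact ih hlt.le
      · have : i = j := le_antisymm hij hge
        subst this
        exact he _ (.predict i s E A a b h r hr hA)
  | scan j s E t a b h ht ih =>
      intro hij
      rcases Nat.lt_or_ge i (j + 1) with hlt | hge
      · exact ih (Nat.lt_succ_iff.mp hlt)
      · have : i = j + 1 := le_antisymm hij hge
        subst this
        exact he _ (.scan j s E t a b h ht)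
  | complete j s k A E a ν π hc hp ihc ihp =>
      intro hij
      rcases Nat.lt_or_ge i j with hlt | hge
      · exact ihc hlt.le
      · have : i = j := le_antisymm hij hge
        subst this
        exact he _ (.complete i s k A E a ν π hc hp)

lemma earley_restrict {T : Type} (g : ContextFreeGrammar T) (α γ : List T) :
    ∀ {j : ℕ} {it : EarleyItem T g.NT}, EarleyInChart g (α ++ γ) j it →
      j ≤ α.length → EarleyInChart g α j it := by
  intro j it h
  induction h with
  | init r hr hinit => exact fun _ => .init r hr hinit
  | predict j s E A a b h r hr hA ih =>
      exact fun hj => .predict j s E A a b (ih hj) r hr hA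
  | scan j s E t a b h ht ih =>
      intro hj
      have hjl : j < α.length := hj
      have ht' : α[j]? = some t := by
        rwa [List.getElem?_append, if_pos hjl] at ht
      exact .scan j s E t a b (ih hjl.le) ht'
  | complete j s k A E a ν π hc hp ihc ihp =>
      intro hj
      have hs : s ≤ j := earley_start_le g (α ++ γ) hc
      exact .complete j s k A E a ν π (ihc hj) (ihp (hs.trans hj))

/-- If chart `i` of an Earley parse of string `α` is empty (where `i ≤ |α|`),
then chart `j` is empty for every `j > i`, and consequently no extension
`α ++ γ` is accepted by the Earley recognizer (i.e. no complete item
`[S → out • (0)]` with `S` the start symbol lies in the final chart). -/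
theorem earley_empty_chart_propagates {T : Type} (g : ContextFreeGrammar T)
    (α : List T) (i : ℕ) (hi : i ≤ α.length)
    (hempty : ∀ it : EarleyItem T g.NT, ¬ EarleyInChart g α i it) :
    (∀ j : ℕ, i < j → ∀ it : EarleyItem T g.NT, ¬ EarleyInChart g α j it) ∧
    (∀ γ : List T, ¬ ∃ out : List (Symbol T g.NT),
      EarleyInChart g (α ++ γ) (α ++ γ).length ⟨g.initial, out, [], 0⟩) := by
  constructor
  · intro j hij it h
    exact earley_prop g α i hempty j it h hij.le
  · rintro γ ⟨out, h⟩
    have he' : ∀ it : EarleyItem T g.NT, ¬ EarleyInChart g (α ++ γ) i it :=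
      fun it hh => hempty it (earley_restrict g α γ hh hi)
    exact earley_prop g (α ++ γ) i he' _ _ h
      (by simpa using hi.trans (Nat.le_add_right _ γ.length))
end

section
/- Soundness of Earley parsing over an NFA: given CFG G with language 𝒢 and NFA φ with language ℛ, run the generalized Earley algorithm which maintains a chart c_q per NFA state q, scanning an item [E → α • a β (i)] in chart c_j to chart c_k for each k ∈ δ(j, a). If the invariants hold and some final NFA state q has an item [S → α • (s₀)] ∈ c_q where (S, α) is a production of G, then ℛ ∩ 𝒢 is non-empty. -/
/-- An Earley item for the generalized Earley algorithm over an NFA: its span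
start is an NFA state (`origin`) rather than an input position. -/
structure EarleyNFAItem (T N σ : Type) where
  lhs : N
  before : List (Symbol T N)
  after : List (Symbol T N)
  origin : σ

/-- Soundness of Earley parsing over an NFA: if the two chart invariants hold
and some accepting NFA state `q` has an item `[S → out • (s₀)]` in its chart,
where `(S, out)` is a production of the grammar, `S` is the start symbol and
`s₀` is the initial NFA state, then `ℛ ∩ 𝒢` is non-empty. -/
theorem earley_nfa_soundness {T σ : Type} (g : ContextFreeGrammar T) (M : NFA T σ)
    (s₀ : σ) (hs₀ : M.start = {s₀})
    (c : σ → Set (EarleyNFAItem T g.NT σ))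
    -- Invariant 1: each item in chart `c j` is witnessed by a string connecting
    -- the item's origin state to `j` that is derivable from the matched part.
    (inv1 : ∀ (j : σ) (it : EarleyNFAItem T g.NT σ), it ∈ c j →
      ∃ γ : List T, j ∈ M.evalFrom {it.origin} γ ∧
        g.Derives it.before (γ.map Symbol.terminal))
    -- Invariant 2: each item's production belongs to the grammar's rules.
    (inv2 : ∀ (j : σ) (it : EarleyNFAItem T g.NT σ), it ∈ c j →
      ∃ r ∈ g.rules, r.input = it.lhs ∧ r.output = it.before ++ it.after)
    (q : σ) (hq : q ∈ M.accept) (out : List (Symbol T g.NT))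
    (hitem : (⟨g.initial, out, [], s₀⟩ : EarleyNFAItem T g.NT σ) ∈ c q)
    (hrule : ∃ r ∈ g.rules, r.input = g.initial ∧ r.output = out) :
    ∃ w : List T, w ∈ M.accepts ∧ w ∈ g.language := by
  obtain ⟨γ, hγ, hder⟩ := inv1 q _ hitem
  refine ⟨γ, ?_, ?_⟩
  · exact ⟨q, hq, by simpa [NFA.eval, hs₀] using hγ⟩
  · obtain ⟨r, hr, hin, hout⟩ := hrule
    have h1 : g.Derives [Symbol.nonterminal g.initial] out := by
      have : g.Produces [Symbol.nonterminal r.input] r.output :=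
        ⟨r, hr, ContextFreeRule.Rewrites.input_output⟩
      simpa [hin, hout] using this.single
    exact h1.trans hder
end

section
/- For the generalized Earley algorithm over an NFA, the scanner operation preserves the chart-correctness invariant: if [E → α • a β (i)] ∈ c_j satisfies the invariant (∃ γ ∈ ℛ[i, j] derivable from α), then for every k ∈ δ(j, a), the item [E → α a • β (i)] added to c_k also satisfies the invariant. -/
/-- The scanner operation of the generalized Earley algorithm over an NFA
preserves the chart-correctness invariant: if the item `[E → a • t β (i)]` in
chart `c_j` satisfies the invariant (some `γ ∈ ℛ[i, j]` is derivable from `a`),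
then for every `k ∈ δ(j, t)` the scanned item `[E → a t • β (i)]` placed in
chart `c_k` also satisfies the invariant. -/
theorem earley_nfa_scanner_preserves_invariant {T σ : Type}
    (g : ContextFreeGrammar T) (M : NFA T σ)
    (i j k : σ) (t : T) (a : List (Symbol T g.NT))
    (hk : k ∈ M.step j t)
    (h : ∃ γ : List T, j ∈ M.evalFrom {i} γ ∧ g.Derives a (γ.map Symbol.terminal)) :
    ∃ γ' : List T, k ∈ M.evalFrom {i} γ' ∧
      g.Derives (a ++ [Symbol.terminal t]) (γ'.map Symbol.terminal) := by
  obtain ⟨γ, hγ, hd⟩ := h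
  refine ⟨γ ++ [t], ?_, ?_⟩
  · rw [NFA.evalFrom_append, NFA.evalFrom_singleton]
    exact (NFA.mem_stepSet ..).2 ⟨j, hγ, hk⟩
  · rw [List.map_append]
    exact ContextFreeGrammar.Derives.append_right hd _
end

section
/- For the generalized Earley algorithm over an NFA, the completer operation preserves the chart-correctness invariant: if [A → α • (i)] ∈ c_j and [E → ν • A π (k)] ∈ c_i both satisfy the invariant, then the item [E → ν A • π (k)] added to c_j satisfies the invariant. -/
lemma nfa_evalFrom_mono {T σ : Type} (M : NFA T σ) {S S' : Set σ} (h : S ⊆ S') :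
    ∀ x : List T, M.evalFrom S x ⊆ M.evalFrom S' x := by
  intro x
  induction x generalizing S S' with
  | nil => simpa [NFA.evalFrom] using h
  | cons a x ih =>
    simp only [NFA.evalFrom, List.foldl_cons] at *
    exact ih (Set.biUnion_subset_biUnion_left h)

/-- The completer operation of the generalized Earley algorithm over an NFA
preserves the chart-correctness invariant: if the complete item `[A → out • (i)]`
in chart `c_j` (with production `(A, out)` in the grammar) and the completable
item `[E → ν • A π (k)]` in chart `c_i` both satisfy the invariant, then the
item `[E → ν A • π (k)]` added to chart `c_j` satisfies the invariant. -/
theorem earley_nfa_completer_preserves_invariant {T σ : Type}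
    (g : ContextFreeGrammar T) (M : NFA T σ)
    (i j k : σ) (A : g.NT) (out ν : List (Symbol T g.NT))
    (hrule : (⟨A, out⟩ : ContextFreeRule T g.NT) ∈ g.rules)
    (h1 : ∃ η : List T, j ∈ M.evalFrom {i} η ∧ g.Derives out (η.map Symbol.terminal))
    (h2 : ∃ γ : List T, i ∈ M.evalFrom {k} γ ∧ g.Derives ν (γ.map Symbol.terminal)) :
    ∃ ζ : List T, j ∈ M.evalFrom {k} ζ ∧
      g.Derives (ν ++ [Symbol.nonterminal A]) (ζ.map Symbol.terminal) := by
  obtain ⟨η, hη, hdη⟩ := h1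
  obtain ⟨γ, hγ, hdγ⟩ := h2
  refine ⟨γ ++ η, ?_, ?_⟩
  · have : M.evalFrom {k} (γ ++ η) = M.evalFrom (M.evalFrom {k} γ) η := by
      simp [NFA.evalFrom, List.foldl_append]
    rw [this]
    exact nfa_evalFrom_mono M (Set.singleton_subset_iff.mpr hγ) η hη
  · rw [List.map_append]
    have hA : g.Derives [Symbol.nonterminal A] (η.map Symbol.terminal) := by
      refine (ContextFreeGrammar.Produces.single ?_).trans hdη
      exact ⟨⟨A, out⟩, hrule, by simpa using ContextFreeRule.Rewrites.head (r := ⟨A, out⟩) []⟩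
    exact (hdγ.append_right _).trans ((hA.append_left _))
end
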